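/- arXiv:2411.12944 — 7 statements merged into one kernel-verified Lean document; each statement's English description precedes it below -/
import Mathlib

section
/- Under Assumption 1, suppose Y^(j) is integrable and E_jk[π_j(Z)] > 0. Define the naive estimator Ȳ_jk = (Σ_{i∈I_jk} 1{A_i=j} Y_i)/(Σ_{i∈I_jk} 1{A_i=j}) (defined arbitrarily when the denominator is 0). Then as n → ∞, Ȳ_jk converges in probability to E_jk[π_j(Z) E(Y^(j)|Z)] / E_jk[π_j(Z)], i.e., the π_j-weighted average of the conditional mean of Y^(j) given Z over the ECE event, divided by the ECE-conditional mean of π_j(Z). -/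
open MeasureTheory ProbabilityTheory Filter Set Topology
open scoped NNReal ENNReal

noncomputable section

lemma key_integral {Ω 𝓩 : Type*} [mΩ : MeasurableSpace Ω] [StandardBorelSpace Ω]
    [MeasurableSpace 𝓩] (P : Measure Ω) [IsProbabilityMeasure P]
    {J : ℕ} (Z : Ω → 𝓩) (A : Ω → Fin J) (g : Ω → ℝ)
    (hZ : Measurable Z) (hA : Measurable A) (hg : Measurable g)
    (hgint : Integrable g P) (j : Fin J)
    (hCI : CondIndepFun (MeasurableSpace.comap Z inferInstance) hZ.comap_le A g P)
    (p : 𝓩 → ℝ) (hp : Measurable p) (hp0 : ∀ z, 0 ≤ p z) (hp1 : ∀ z, p z ≤ 1)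
    (hprop : (P[Set.indicator {ω' | A ω' = j} (fun _ => (1:ℝ)) |
        MeasurableSpace.comap Z inferInstance]) =ᵐ[P] fun ω => p (Z ω))
    (E : Set Ω) (hE : MeasurableSet[MeasurableSpace.comap Z inferInstance] E) :
    ∫ ω in E, Set.indicator {ω' | A ω' = j} (fun _ => (1:ℝ)) ω * g ω ∂P
      = ∫ ω in E, p (Z ω) * g ω ∂P := by
  classical
  have hm : MeasurableSpace.comap Z inferInstance ≤ mΩ := hZ.comap_le
  haveI : SigmaFinite (P.trim hm) := by
    have : IsFiniteMeasure (P.trim hm) := isFiniteMeasure_trim hm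
    infer_instance
  have hEmeas : MeasurableSet E := hm E hE
  set B : Set Ω := {ω' | A ω' = j} with hB_def
  have hBmeas : MeasurableSet B := hA (measurableSet_singleton j)
  set ind : Ω → ℝ := Set.indicator B (fun _ => (1:ℝ)) with hind_def
  have hindmeas : Measurable ind := (measurable_const.indicator hBmeas)
  have hindint : Integrable ind P := (integrable_const (1:ℝ)).indicator hBmeas
  have hind01 : ∀ ω, 0 ≤ ind ω ∧ ind ω ≤ 1 := by
    intro ω
    by_cases h : ω ∈ B <;> simp [hind_def, Set.indicator_apply, h]
  have hZm : Measurable[MeasurableSpace.comap Z inferInstance] Z := fun s hs => ⟨s, hs, rfl⟩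
  have hpZsm : StronglyMeasurable[MeasurableSpace.comap Z inferInstance] fun ω => p (Z ω) :=
    ((hp.comp hZm)).stronglyMeasurable
  have hpZint : Integrable (fun ω => p (Z ω)) P := by
    have := (integrable_const (μ := P) (1:ℝ)).bdd_mul (hp.comp hZ).aestronglyMeasurable
      (c := 1) (Filter.Eventually.of_forall fun ω => by
        simp only [Function.comp_apply, Real.norm_eq_abs, abs_of_nonneg (hp0 (Z ω))]
        exact hp1 (Z ω))
    simpa using this
  -- base case : indicators of sets in σ(g)
  have base : ∀ t : Set ℝ, MeasurableSet t →
      ∫ ω in E, ind ω * Set.indicator (g ⁻¹' t) (fun _ => (1:ℝ)) ω ∂P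
        = ∫ ω in E, p (Z ω) * Set.indicator (g ⁻¹' t) (fun _ => (1:ℝ)) ω ∂P := by
    intro t ht
    have hgt : MeasurableSet (g ⁻¹' t) := hg ht
    have h1sint : Integrable (Set.indicator (g ⁻¹' t) (fun _ => (1:ℝ))) P :=
      (integrable_const (1:ℝ)).indicator hgt
    have hBt : MeasurableSet (B ∩ g ⁻¹' t) := hBmeas.inter hgt
    have hBtint : Integrable (Set.indicator (B ∩ g ⁻¹' t) (fun _ => (1:ℝ))) P :=
      (integrable_const (1:ℝ)).indicator hBt
    have hprod := (condIndepFun_iff_condExp_inter_preimage_eq_mul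
      (hm' := hm) (μ := P) hA hg).1 hCI {j} t (measurableSet_singleton j) ht
    have hApre : A ⁻¹' {j} = B := rfl
    rw [hApre] at hprod
    have hmulint : Integrable ((fun ω => p (Z ω)) * Set.indicator (g ⁻¹' t) (fun _ => (1:ℝ))) P :=
      h1sint.bdd_mul (hp.comp hZ).aestronglyMeasurable
        (c := 1) (Filter.Eventually.of_forall fun ω => by rw [Real.norm_eq_abs, abs_of_nonneg (hp0 _)]; exact hp1 _)
    calc ∫ ω in E, ind ω * Set.indicator (g ⁻¹' t) (fun _ => (1:ℝ)) ω ∂P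
        = ∫ ω in E, Set.indicator (B ∩ g ⁻¹' t) (fun _ => (1:ℝ)) ω ∂P := by
          refine setIntegral_congr_fun hEmeas (fun ω _ => ?_)
          by_cases h1 : ω ∈ B <;> by_cases h2 : ω ∈ g ⁻¹' t <;>
            simp [hind_def, Set.indicator_apply, h1, h2]
      _ = ∫ ω in E, (P[Set.indicator (B ∩ g ⁻¹' t) (fun _ => (1:ℝ))|
            MeasurableSpace.comap Z inferInstance]) ω ∂P :=
          (setIntegral_condExp hm hBtint hE).symm
      _ = ∫ ω in E, p (Z ω) * (P[Set.indicator (g ⁻¹' t) (fun _ => (1:ℝ))|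
            MeasurableSpace.comap Z inferInstance]) ω ∂P := by
          refine setIntegral_congr_ae hEmeas ?_
          filter_upwards [hprod, hprop] with ω h1 h2 _
          rw [h1, h2]
      _ = ∫ ω in E, (P[(fun ω => p (Z ω)) * Set.indicator (g ⁻¹' t) (fun _ => (1:ℝ))|
            MeasurableSpace.comap Z inferInstance]) ω ∂P := by
          refine setIntegral_congr_ae hEmeas ?_
          filter_upwards [condExp_mul_of_stronglyMeasurable_left hpZsm hmulint h1sint] with ω hω _
          rw [hω]; rfl
      _ = ∫ ω in E, ((fun ω => p (Z ω)) * Set.indicator (g ⁻¹' t) (fun _ => (1:ℝ))) ω ∂P :=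
          setIntegral_condExp hm hmulint hE
      _ = ∫ ω in E, p (Z ω) * Set.indicator (g ⁻¹' t) (fun _ => (1:ℝ)) ω ∂P := rfl
  -- extend to g via the trimmed σ-algebra σ(g)
  have hmY : MeasurableSpace.comap g inferInstance ≤ mΩ := hg.comap_le
  have hgm : Measurable[MeasurableSpace.comap g inferInstance] g := fun s hs => ⟨s, hs, rfl⟩
  have hgsm : StronglyMeasurable[MeasurableSpace.comap g inferInstance] g :=
    Measurable.stronglyMeasurable (mα := MeasurableSpace.comap g inferInstance) hgm
  set d₁ : Ω → ℝ≥0 := fun ω => Real.toNNReal (ind ω) with hd₁_def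
  set d₂ : Ω → ℝ≥0 := fun ω => Real.toNNReal (p (Z ω)) with hd₂_def
  have hd₁meas : Measurable d₁ := hindmeas.real_toNNReal
  have hd₂meas : Measurable d₂ := (hp.comp hZ).real_toNNReal
  set μ₁ : Measure Ω := (P.restrict E).withDensity (fun ω => (d₁ ω : ℝ≥0∞)) with hμ₁_def
  set μ₂ : Measure Ω := (P.restrict E).withDensity (fun ω => (d₂ ω : ℝ≥0∞)) with hμ₂_def
  have h1 : ∫ ω in E, ind ω * g ω ∂P = ∫ ω, g ω ∂μ₁ := by
    rw [hμ₁_def, integral_withDensity_eq_integral_smul hd₁meas]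
    refine setIntegral_congr_fun hEmeas (fun ω _ => ?_)
    simp [hd₁_def, NNReal.smul_def, Real.coe_toNNReal _ (hind01 ω).1]
  have h2 : ∫ ω in E, p (Z ω) * g ω ∂P = ∫ ω, g ω ∂μ₂ := by
    rw [hμ₂_def, integral_withDensity_eq_integral_smul hd₂meas]
    refine setIntegral_congr_fun hEmeas (fun ω _ => ?_)
    simp [hd₂_def, NNReal.smul_def, Real.coe_toNNReal _ (hp0 (Z ω))]
  have h5 : μ₁.trim hmY = μ₂.trim hmY := by
    refine @Measure.ext Ω (MeasurableSpace.comap g inferInstance) _ _ fun s hs => ?_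
    rw [trim_measurableSet_eq hmY hs, trim_measurableSet_eq hmY hs]
    obtain ⟨t, ht, rfl⟩ := hs
    have hgt : MeasurableSet (g ⁻¹' t) := hg ht
    rw [hμ₁_def, hμ₂_def, withDensity_apply _ hgt, withDensity_apply _ hgt,
      Measure.restrict_restrict hgt]
    have e₁ : ∀ ω, (d₁ ω : ℝ≥0∞) = ENNReal.ofReal (ind ω) := fun ω => rfl
    have e₂ : ∀ ω, (d₂ ω : ℝ≥0∞) = ENNReal.ofReal (p (Z ω)) := fun ω => rfl
    simp_rw [e₁, e₂]
    rw [← ofReal_integral_eq_lintegral_ofReal (hindint.restrict)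
        (Filter.Eventually.of_forall fun ω => (hind01 ω).1),
      ← ofReal_integral_eq_lintegral_ofReal (hpZint.restrict)
        (Filter.Eventually.of_forall fun ω => hp0 (Z ω))]
    congr 1
    have bb := base t ht
    have l1 : ∫ ω in g ⁻¹' t ∩ E, ind ω ∂P
        = ∫ ω in E, ind ω * Set.indicator (g ⁻¹' t) (fun _ => (1:ℝ)) ω ∂P := by
      rw [Set.inter_comm, ← setIntegral_indicator hgt]
      refine setIntegral_congr_fun hEmeas (fun ω _ => ?_)
      by_cases h2 : ω ∈ g ⁻¹' t <;> simp [Set.indicator_apply, h2]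
    have l2 : ∫ ω in g ⁻¹' t ∩ E, p (Z ω) ∂P
        = ∫ ω in E, p (Z ω) * Set.indicator (g ⁻¹' t) (fun _ => (1:ℝ)) ω ∂P := by
      rw [Set.inter_comm, ← setIntegral_indicator hgt]
      refine setIntegral_congr_fun hEmeas (fun ω _ => ?_)
      by_cases h2 : ω ∈ g ⁻¹' t <;> simp [Set.indicator_apply, h2]
    rw [l1, l2, bb]
  rw [h1, h2, integral_trim hmY hgsm, integral_trim hmY hgsm, h5]

/-- the naive estimator converges in probability to
E_jk[π_j(Z)E(Y^(j)|Z)] / E_jk[π_j(Z)]. -/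
theorem stmt_0
    {Ω 𝓩 𝓦 : Type*} [MeasurableSpace Ω] [StandardBorelSpace Ω]
    [MeasurableSpace 𝓩] [MeasurableSpace 𝓦]
    (P : Measure Ω) [IsProbabilityMeasure P]
    {J : ℕ} (Z : Ω → 𝓩) (W : Ω → 𝓦) (A : Ω → Fin J) (Y : Fin J → Ω → ℝ)
    (hZ : Measurable Z) (hW : Measurable W) (hA : Measurable A)
    (hY : ∀ m, Measurable (Y m)) (hY2 : ∀ m, MemLp (Y m) 2 P)
    (π : Fin J → 𝓩 → ℝ) (hπmeas : ∀ m, Measurable (π m))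
    (hπ01 : ∀ m z, π m z ∈ Set.Icc (0:ℝ) 1)
    (hπsum : ∀ z, ∑ m, π m z = 1)
    -- Assumption 1: A ⟂ (W, Y^(1),…,Y^(J)) given Z
    (hCI : CondIndepFun (MeasurableSpace.comap Z inferInstance) hZ.comap_le A
        (fun ω => (W ω, fun m => Y m ω)) P)
    -- Assumption 1: P(A = m | Z) = π_m(Z) a.s.
    (hprop : ∀ m : Fin J,
      (P[ Set.indicator {ω' | A ω' = m} (fun _ => (1:ℝ)) | MeasurableSpace.comap Z inferInstance])
        =ᵐ[P] fun ω => π m (Z ω))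
    (j k : Fin J) (hjk : j ≠ k)
    -- the ECE event, with positive probability
    (ECE : Set Ω) (hECE : ECE = {ω | 0 < π j (Z ω) ∧ 0 < π k (Z ω)})
    (hECEpos : P ECE ≠ 0)
    -- observed outcome Y = Y^(A)
    (Yobs : Ω → ℝ) (hYobs : ∀ ω, Yobs ω = Y (A ω) ω)
    -- i.i.d. sample
    (Ws : ℕ → Ω → 𝓦) (Zs : ℕ → Ω → 𝓩) (As : ℕ → Ω → Fin J) (Ys : ℕ → Ω → ℝ)
    (hmeasWs : ∀ i, Measurable (Ws i)) (hmeasZs : ∀ i, Measurable (Zs i))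
    (hmeasAs : ∀ i, Measurable (As i)) (hmeasYs : ∀ i, Measurable (Ys i))
    (hiid : iIndepFun (fun i ω => (Ws i ω, Zs i ω, As i ω, Ys i ω)) P)
    (hident : ∀ i, IdentDistrib (fun ω => (Ws i ω, Zs i ω, As i ω, Ys i ω))
        (fun ω => (W ω, Z ω, A ω, Yobs ω)) P P)
    -- Y^(j) integrable and E_jk[π_j(Z)] > 0
    (hYint : Integrable (Y j) P)
    (hπpos : 0 < ∫ ω, π j (Z ω) ∂P[|ECE]) :
    TendstoInMeasure P
      (fun n ω =>
        (∑ i ∈ Finset.range n,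
            if (0 < π j (Zs i ω) ∧ 0 < π k (Zs i ω)) ∧ As i ω = j then Ys i ω else 0)
        / (∑ i ∈ Finset.range n,
            if (0 < π j (Zs i ω) ∧ 0 < π k (Zs i ω)) ∧ As i ω = j then (1:ℝ) else 0))
      atTop
      (fun _ =>
        (∫ ω, π j (Z ω) * (P[Y j|MeasurableSpace.comap Z inferInstance]) ω ∂P[|ECE])
        / (∫ ω, π j (Z ω) ∂P[|ECE])) := by
  classical
  have hm : MeasurableSpace.comap Z inferInstance ≤ ‹MeasurableSpace Ω› := hZ.comap_le
  haveI : SigmaFinite (P.trim hm) := by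
    have : IsFiniteMeasure (P.trim hm) := isFiniteMeasure_trim hm
    infer_instance
  -- measurability of the observed outcome
  have hYobsmeas : Measurable Yobs := by
    have h : Measurable fun q : Ω × Fin J => Y q.2 q.1 :=
      measurable_from_prod_countable_left fun a => hY a
    have he : Yobs = fun ω => (fun q : Ω × Fin J => Y q.2 q.1) (ω, A ω) :=
      funext fun ω => hYobs ω
    rw [he]
    exact h.comp (measurable_id.prodMk hA)
  -- the ECE event
  have hCset : MeasurableSet {z : 𝓩 | 0 < π j z ∧ 0 < π k z} :=
    (measurableSet_lt measurable_const (hπmeas j)).inter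
      (measurableSet_lt measurable_const (hπmeas k))
  have hEm : MeasurableSet[MeasurableSpace.comap Z inferInstance] ECE :=
    ⟨{z | 0 < π j z ∧ 0 < π k z}, hCset, by rw [hECE]; rfl⟩
  have hEmeas : MeasurableSet ECE := hm _ hEm
  set B : Set Ω := {ω' | A ω' = j} with hB_def
  have hBmeas : MeasurableSet B := hA (measurableSet_singleton j)
  set S : Set Ω := {ω | (0 < π j (Z ω) ∧ 0 < π k (Z ω)) ∧ A ω = j} with hS_def
  have hSeq : S = ECE ∩ B := by rw [hS_def, hECE]; rfl
  have hSmeas : MeasurableSet S := by rw [hSeq]; exact hEmeas.inter hBmeas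
  -- the prototype summands
  set F : Ω → ℝ := fun ω =>
    if (0 < π j (Z ω) ∧ 0 < π k (Z ω)) ∧ A ω = j then Yobs ω else 0 with hF_def
  set G : Ω → ℝ := fun ω =>
    if (0 < π j (Z ω) ∧ 0 < π k (Z ω)) ∧ A ω = j then (1:ℝ) else 0 with hG_def
  have hFind : F = Set.indicator S (Y j) := by
    funext ω
    by_cases h : (0 < π j (Z ω) ∧ 0 < π k (Z ω)) ∧ A ω = j
    · rw [hF_def]
      simp only [if_pos h, Set.indicator_of_mem (show ω ∈ S from h)]
      rw [hYobs ω, h.2]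
    · rw [hF_def]
      simp only [if_neg h, Set.indicator_of_notMem (show ω ∉ S from h)]
  have hGind : G = Set.indicator S (fun _ => (1:ℝ)) := by
    funext ω
    by_cases h : (0 < π j (Z ω) ∧ 0 < π k (Z ω)) ∧ A ω = j
    · rw [hG_def]; simp only [if_pos h, Set.indicator_of_mem (show ω ∈ S from h)]
    · rw [hG_def]; simp only [if_neg h, Set.indicator_of_notMem (show ω ∉ S from h)]
  have hFint : Integrable F P := by rw [hFind]; exact hYint.indicator hSmeas
  have hGint : Integrable G P := by rw [hGind]; exact (integrable_const (1:ℝ)).indicator hSmeas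
  -- conditional independence of A and Y j
  have hCIj : CondIndepFun (MeasurableSpace.comap Z inferInstance) hZ.comap_le A (Y j) P := by
    have hψ : Measurable fun q : 𝓦 × (Fin J → ℝ) => q.2 j :=
      (measurable_pi_apply j).comp measurable_snd
    exact hCI.comp measurable_id hψ
  -- key identity
  have hkey := key_integral P Z A (Y j) hZ hA (hY j) hYint j hCIj (π j) (hπmeas j)
      (fun z => (hπ01 j z).1) (fun z => (hπ01 j z).2) (hprop j) ECE hEm
  -- numerator expectation
  have hEN1 : ∫ ω in ECE, Set.indicator B (fun _ => (1:ℝ)) ω * Y j ω ∂P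
      = ∫ ω in ECE ∩ B, Y j ω ∂P := by
    rw [← setIntegral_indicator hBmeas]
    refine setIntegral_congr_fun hEmeas fun ω _ => ?_
    by_cases h : ω ∈ B <;> simp [Set.indicator_apply, h]
  have hENeq : ∫ ω, F ω ∂P = ∫ ω in ECE, π j (Z ω) * Y j ω ∂P := by
    rw [hFind, integral_indicator hSmeas, hSeq, ← hEN1]
    exact hkey
  -- denominator expectation
  have hindint : Integrable (Set.indicator B (fun _ => (1:ℝ))) P :=
    (integrable_const (1:ℝ)).indicator hBmeas
  have hGeq : ∫ ω, G ω ∂P = ∫ ω in ECE, π j (Z ω) ∂P := by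
    rw [hGind, integral_indicator hSmeas, hSeq]
    calc ∫ ω in ECE ∩ B, (1:ℝ) ∂P
        = ∫ ω in ECE, Set.indicator B (fun _ => (1:ℝ)) ω ∂P :=
          (setIntegral_indicator hBmeas).symm
      _ = ∫ ω in ECE, (P[Set.indicator {ω' | A ω' = j} (fun _ => (1:ℝ))|
            MeasurableSpace.comap Z inferInstance]) ω ∂P :=
          (setIntegral_condExp hm hindint hEm).symm
      _ = ∫ ω in ECE, π j (Z ω) ∂P := by
          refine setIntegral_congr_ae hEmeas ?_
          filter_upwards [hprop j] with ω h _
          rw [h]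
  -- pull-out property for the conditional expectation of Y j
  have hZm : Measurable[MeasurableSpace.comap Z inferInstance] Z := fun s hs => ⟨s, hs, rfl⟩
  have hπZsm : StronglyMeasurable[MeasurableSpace.comap Z inferInstance] fun ω => π j (Z ω) :=
    ((hπmeas j).comp hZm).stronglyMeasurable
  have hπY : Integrable ((fun ω => π j (Z ω)) * Y j) P :=
    hYint.bdd_mul ((hπmeas j).comp hZ).aestronglyMeasurable
      (c := 1) (Filter.Eventually.of_forall fun ω => by
        rw [Real.norm_eq_abs, abs_of_nonneg (hπ01 j (Z ω)).1]
        exact (hπ01 j (Z ω)).2)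
  have hpull := condExp_mul_of_stronglyMeasurable_left hπZsm hπY hYint
  have hcNint : ∫ ω in ECE, π j (Z ω) * (P[Y j|MeasurableSpace.comap Z inferInstance]) ω ∂P
      = ∫ ω in ECE, π j (Z ω) * Y j ω ∂P := by
    calc ∫ ω in ECE, π j (Z ω) * (P[Y j|MeasurableSpace.comap Z inferInstance]) ω ∂P
        = ∫ ω in ECE, (P[(fun ω => π j (Z ω)) * Y j|MeasurableSpace.comap Z inferInstance]) ω ∂P := by
          refine setIntegral_congr_ae hEmeas ?_
          filter_upwards [hpull] with ω hω _
          rw [hω]; rfl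
      _ = ∫ ω in ECE, ((fun ω => π j (Z ω)) * Y j) ω ∂P := setIntegral_condExp hm hπY hEm
      _ = ∫ ω in ECE, π j (Z ω) * Y j ω ∂P := rfl
  -- conditional measure integrals
  set τ : ℝ := (P ECE).toReal with hτ_def
  have hτpos : 0 < τ := ENNReal.toReal_pos hECEpos (measure_ne_top _ _)
  have hcond : ∀ f : Ω → ℝ, ∫ ω, f ω ∂P[|ECE] = τ⁻¹ * ∫ ω in ECE, f ω ∂P := by
    intro f
    show ∫ ω, f ω ∂((P ECE)⁻¹ • P.restrict ECE) = _
    rw [integral_smul_measure, ENNReal.toReal_inv, smul_eq_mul]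
  set cN : ℝ := ∫ ω, π j (Z ω) * (P[Y j|MeasurableSpace.comap Z inferInstance]) ω ∂P[|ECE]
    with hcN_def
  set cD : ℝ := ∫ ω, π j (Z ω) ∂P[|ECE] with hcD_def
  have hcNval : cN = τ⁻¹ * ∫ ω in ECE, π j (Z ω) * Y j ω ∂P := by
    rw [hcN_def, hcond, hcNint]
  have hcDval : cD = τ⁻¹ * ∫ ω in ECE, π j (Z ω) ∂P := by
    rw [hcD_def, hcond]
  have hENc : ∫ ω, F ω ∂P = τ * cN := by
    rw [hENeq, hcNval, ← mul_assoc, mul_inv_cancel₀ (ne_of_gt hτpos), one_mul]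
  have hEDc : ∫ ω, G ω ∂P = τ * cD := by
    rw [hGeq, hcDval, ← mul_assoc, mul_inv_cancel₀ (ne_of_gt hτpos), one_mul]
  have hEDpos : 0 < ∫ ω, G ω ∂P := by
    rw [hEDc]; exact mul_pos hτpos hπpos
  -- the sampled summands
  set φN : 𝓦 × 𝓩 × Fin J × ℝ → ℝ := fun q =>
    if (0 < π j q.2.1 ∧ 0 < π k q.2.1) ∧ q.2.2.1 = j then q.2.2.2 else 0 with hφN_def
  set φD : 𝓦 × 𝓩 × Fin J × ℝ → ℝ := fun q =>
    if (0 < π j q.2.1 ∧ 0 < π k q.2.1) ∧ q.2.2.1 = j then (1:ℝ) else 0 with hφD_def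
  have hcondset : MeasurableSet
      {q : 𝓦 × 𝓩 × Fin J × ℝ | (0 < π j q.2.1 ∧ 0 < π k q.2.1) ∧ q.2.2.1 = j} := by
    have h1 : MeasurableSet {q : 𝓦 × 𝓩 × Fin J × ℝ | 0 < π j q.2.1} :=
      measurableSet_lt measurable_const ((hπmeas j).comp measurable_snd.fst)
    have h2 : MeasurableSet {q : 𝓦 × 𝓩 × Fin J × ℝ | 0 < π k q.2.1} :=
      measurableSet_lt measurable_const ((hπmeas k).comp measurable_snd.fst)
    have h3 : MeasurableSet {q : 𝓦 × 𝓩 × Fin J × ℝ | q.2.2.1 = j} :=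
      measurable_snd.snd.fst (measurableSet_singleton j)
    exact (h1.inter h2).inter h3
  have hφNmeas : Measurable φN :=
    Measurable.ite hcondset measurable_snd.snd.snd measurable_const
  have hφDmeas : Measurable φD :=
    Measurable.ite hcondset measurable_const measurable_const
  set qs : ℕ → Ω → 𝓦 × 𝓩 × Fin J × ℝ := fun i ω => (Ws i ω, Zs i ω, As i ω, Ys i ω) with hqs_def
  have hqsmeas : ∀ i, Measurable (qs i) := fun i =>
    (hmeasWs i).prodMk ((hmeasZs i).prodMk ((hmeasAs i).prodMk (hmeasYs i)))
  set XN : ℕ → Ω → ℝ := fun i ω => φN (qs i ω) with hXN_def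
  set XD : ℕ → Ω → ℝ := fun i ω => φD (qs i ω) with hXD_def
  have hXNmeas : ∀ i, Measurable (XN i) := fun i => hφNmeas.comp (hqsmeas i)
  have hXDmeas : ∀ i, Measurable (XD i) := fun i => hφDmeas.comp (hqsmeas i)
  have hidN : ∀ i, IdentDistrib (XN i) F P P := fun i => (hident i).comp hφNmeas
  have hidD : ∀ i, IdentDistrib (XD i) G P P := fun i => (hident i).comp hφDmeas
  have hindepN : Pairwise (Function.onFun (IndepFun · · P) XN) := fun i i' hii' =>
    (hiid.indepFun hii').comp hφNmeas hφNmeas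
  have hindepD : Pairwise (Function.onFun (IndepFun · · P) XD) := fun i i' hii' =>
    (hiid.indepFun hii').comp hφDmeas hφDmeas
  -- strong law of large numbers
  have hlawN : ∀ᵐ ω ∂P, Tendsto (fun n : ℕ => (∑ i ∈ Finset.range n, XN i ω) / n) atTop
      (𝓝 (∫ ω, F ω ∂P)) := by
    have h0 : Integrable (XN 0) P := (hidN 0).integrable_iff.2 hFint
    have := strong_law_ae_real XN h0 hindepN (fun i => (hidN i).trans (hidN 0).symm)
    rw [show (P[XN 0]) = ∫ ω, F ω ∂P from (hidN 0).integral_eq] at this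
    exact this
  have hlawD : ∀ᵐ ω ∂P, Tendsto (fun n : ℕ => (∑ i ∈ Finset.range n, XD i ω) / n) atTop
      (𝓝 (∫ ω, G ω ∂P)) := by
    have h0 : Integrable (XD 0) P := (hidD 0).integrable_iff.2 hGint
    have := strong_law_ae_real XD h0 hindepD (fun i => (hidD i).trans (hidD 0).symm)
    rw [show (P[XD 0]) = ∫ ω, G ω ∂P from (hidD 0).integral_eq] at this
    exact this
  -- almost sure convergence of the ratio
  have hae : ∀ᵐ ω ∂P, Tendsto (fun n : ℕ =>
      (∑ i ∈ Finset.range n, XN i ω) / (∑ i ∈ Finset.range n, XD i ω)) atTop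
      (𝓝 ((∫ ω, F ω ∂P) / (∫ ω, G ω ∂P))) := by
    filter_upwards [hlawN, hlawD] with ω h1 h2
    have h3 := h1.div h2 (ne_of_gt hEDpos)
    refine Tendsto.congr' ?_ h3
    filter_upwards [eventually_ge_atTop 1] with n hn
    have hn' : (n:ℝ) ≠ 0 := Nat.cast_ne_zero.2 (by omega)
    show (∑ i ∈ Finset.range n, XN i ω) / ↑n / ((∑ i ∈ Finset.range n, XD i ω) / ↑n) = _
    rw [div_div_div_comm, div_self hn', div_one]
  have hlimeq : (∫ ω, F ω ∂P) / (∫ ω, G ω ∂P) = cN / cD := by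
    rw [hENc, hEDc, mul_div_mul_left _ _ (ne_of_gt hτpos)]
  rw [hlimeq] at hae
  have hfmeas : ∀ n : ℕ, AEStronglyMeasurable (fun ω =>
      (∑ i ∈ Finset.range n, XN i ω) / (∑ i ∈ Finset.range n, XD i ω)) P := fun n =>
    ((Finset.measurable_sum _ fun i _ => hXNmeas i).div
      (Finset.measurable_sum _ fun i _ => hXDmeas i)).aestronglyMeasurable
  exact tendstoInMeasure_of_tendsto_ae hfmeas hae
end
end

section
/- (Lemma S1.) Suppose S is a random variable that is a measurable function of Z such that each of π_1(Z),…,π_J(Z) is measurable with respect to the σ-algebra generated by S. Then under Assumption 1: (a) A is conditionally independent of (W, Y^(1),…,Y^(J)) given S; and (b) for every j ∈ {1,…,J}, P(A = j | S) = π_j(Z) almost surely. -/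
open MeasureTheory ProbabilityTheory Filter Set

noncomputable section

/-- Lemma S1: if S is a measurable function of Z such that each π_m(Z) is
σ(S)-measurable, then A ⟂ (W, Y^(1),…,Y^(J)) given S and P(A = m | S) = π_m(Z) a.s. -/
theorem stmt_2
    {Ω 𝓩 𝓦 𝓢 : Type*} [MeasurableSpace Ω] [StandardBorelSpace Ω]
    [MeasurableSpace 𝓩] [MeasurableSpace 𝓦] [MeasurableSpace 𝓢]
    (P : Measure Ω) [IsProbabilityMeasure P]
    {J : ℕ} (Z : Ω → 𝓩) (W : Ω → 𝓦) (A : Ω → Fin J) (Y : Fin J → Ω → ℝ)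
    (hZ : Measurable Z) (hW : Measurable W) (hA : Measurable A)
    (hY : ∀ m, Measurable (Y m)) (hY2 : ∀ m, MemLp (Y m) 2 P)
    (π : Fin J → 𝓩 → ℝ) (hπmeas : ∀ m, Measurable (π m))
    (hπ01 : ∀ m z, π m z ∈ Set.Icc (0:ℝ) 1)
    (hπsum : ∀ z, ∑ m, π m z = 1)
    -- Assumption 1: A ⟂ (W, Y^(1),…,Y^(J)) given Z
    (hCI : CondIndepFun (MeasurableSpace.comap Z inferInstance) hZ.comap_le A
        (fun ω => (W ω, fun m => Y m ω)) P)
    -- Assumption 1: P(A = m | Z) = π_m(Z) a.s.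
    (hprop : ∀ m : Fin J,
      (P[ Set.indicator {ω' | A ω' = m} (fun _ => (1:ℝ)) | MeasurableSpace.comap Z inferInstance])
        =ᵐ[P] fun ω => π m (Z ω))
    -- S is a measurable function of Z
    (S : Ω → 𝓢) (hS : Measurable S) (hSZ : ∃ g : 𝓩 → 𝓢, Measurable g ∧ ∀ ω, S ω = g (Z ω))
    -- each π_m(Z) is measurable with respect to σ(S)
    (hπS : ∀ m : Fin J,
      Measurable[MeasurableSpace.comap S inferInstance] (fun ω => π m (Z ω))) :
    CondIndepFun (MeasurableSpace.comap S inferInstance) hS.comap_le A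
        (fun ω => (W ω, fun m => Y m ω)) P
    ∧ ∀ m : Fin J,
      (P[ Set.indicator {ω' | A ω' = m} (fun _ => (1:ℝ)) | MeasurableSpace.comap S inferInstance])
        =ᵐ[P] fun ω => π m (Z ω) := by

  classical
  obtain ⟨g, hg, hSg⟩ := hSZ
  have hle : MeasurableSpace.comap S inferInstance ≤ (MeasurableSpace.comap Z inferInstance : MeasurableSpace Ω) := by
    have hSgZ : S = g ∘ Z := funext hSg
    rw [hSgZ, ← MeasurableSpace.comap_comp]
    exact MeasurableSpace.comap_mono hg.comap_le
  have hZle : MeasurableSpace.comap Z inferInstance ≤ (inferInstance : MeasurableSpace Ω) := hZ.comap_le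
  have hSle : MeasurableSpace.comap S inferInstance ≤ (inferInstance : MeasurableSpace Ω) := hS.comap_le
  -- part (b)
  have hb : ∀ m : Fin J,
      (P[ Set.indicator {ω' | A ω' = m} (fun _ => (1:ℝ)) | MeasurableSpace.comap S inferInstance])
        =ᵐ[P] fun ω => π m (Z ω) := by
    intro m
    have h1 : (P[ Set.indicator {ω' | A ω' = m} (fun _ => (1:ℝ)) | MeasurableSpace.comap S inferInstance])
        =ᵐ[P] P[ P[ Set.indicator {ω' | A ω' = m} (fun _ => (1:ℝ)) | MeasurableSpace.comap Z inferInstance] | MeasurableSpace.comap S inferInstance] :=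
      (condExp_condExp_of_le hle hZle).symm
    have h2 : P[ P[ Set.indicator {ω' | A ω' = m} (fun _ => (1:ℝ)) | MeasurableSpace.comap Z inferInstance] | MeasurableSpace.comap S inferInstance]
        =ᵐ[P] P[ (fun ω => π m (Z ω)) | MeasurableSpace.comap S inferInstance] := condExp_congr_ae (hprop m)
    have h3 : P[ (fun ω => π m (Z ω)) | MeasurableSpace.comap S inferInstance] = fun ω => π m (Z ω) := by
      refine condExp_of_stronglyMeasurable hSle ((hπS m).stronglyMeasurable) ?_
      refine (integrable_const (1:ℝ)).mono' (((hπmeas m).comp hZ).aestronglyMeasurable) ?_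
      exact Eventually.of_forall fun ω => by
        have := hπ01 m (Z ω)
        rw [Real.norm_eq_abs, abs_le]
        constructor <;> linarith [this.1, this.2]
    exact h1.trans (h2.trans (by rw [h3]))
  refine ⟨?_, hb⟩
  -- part (a)
  set X : Ω → 𝓦 × (Fin J → ℝ) := fun ω => (W ω, fun m => Y m ω) with hX
  have hXm : Measurable X := hW.prodMk (measurable_pi_lambda _ fun m => hY m)
  rw [condIndepFun_iff_condExp_inter_preimage_eq_mul hA hXm]
  have hCI' := (condIndepFun_iff_condExp_inter_preimage_eq_mul hA hXm).mp hCI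
  intro s t hs ht
  -- notation
  set f1 : Ω → ℝ := (A ⁻¹' s).indicator (fun _ => (1:ℝ)) with hf1
  set f2 : Ω → ℝ := (X ⁻¹' t).indicator (fun _ => (1:ℝ)) with hf2
  set p : Ω → ℝ := fun ω => ∑ m ∈ s.toFinset, π m (Z ω) with hp
  have hpS : StronglyMeasurable[MeasurableSpace.comap S inferInstance] p := by
    apply Measurable.stronglyMeasurable
    exact Finset.measurable_sum _ fun m _ => hπS m
  have hpbdd : ∀ ω, ‖p ω‖ ≤ (J : ℝ) := by
    intro ω
    rw [Real.norm_eq_abs, abs_le]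
    constructor
    · have : (0:ℝ) ≤ p ω := Finset.sum_nonneg fun m _ => (hπ01 m (Z ω)).1
      linarith
    · calc p ω ≤ ∑ m ∈ s.toFinset, (1:ℝ) :=
          Finset.sum_le_sum fun m _ => (hπ01 m (Z ω)).2
        _ = s.toFinset.card := by simp
        _ ≤ (J : ℝ) := by
          exact_mod_cast (Finset.card_le_card (Finset.subset_univ _)).trans (by simp)
  -- f1 = sum of indicators
  have hf1sum : f1 = fun ω => ∑ m ∈ s.toFinset, ({ω' | A ω' = m}).indicator (fun _ => (1:ℝ)) ω := by
    funext ω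
    simp only [hf1, Set.indicator_apply, Set.mem_preimage, Set.mem_setOf_eq]
    by_cases h : A ω ∈ s
    · rw [if_pos h, Finset.sum_eq_single (A ω)]
      · simp
      · intro m _ hm; rw [if_neg (fun hh => hm hh.symm)]
      · intro hmem; exact absurd (Set.mem_toFinset.mpr h) hmem
    · rw [if_neg h]
      symm; apply Finset.sum_eq_zero
      intro m hm
      rw [if_neg]
      intro hh; exact h (hh ▸ Set.mem_toFinset.mp hm)
  -- condexp of f1 over mZ equals p
  have hcondf1Z : P[f1 | MeasurableSpace.comap Z inferInstance] =ᵐ[P] p := by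
    rw [hf1sum]
    have heq : (fun ω => ∑ m ∈ s.toFinset, ({ω' | A ω' = m}).indicator (fun _ => (1:ℝ)) ω)
        = ∑ m ∈ s.toFinset, ({ω' | A ω' = m}).indicator (fun _ => (1:ℝ)) := by
      funext ω; exact (Finset.sum_apply ω s.toFinset _).symm
    rw [heq]
    have := condExp_finsetSum (μ := P) (m := MeasurableSpace.comap Z inferInstance)
      (s := s.toFinset) (f := fun m => ({ω' | A ω' = m}).indicator (fun _ => (1:ℝ)))
      (fun m _ => (integrable_const (1:ℝ)).indicator (hA (MeasurableSet.singleton m)))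
    refine this.trans ?_
    have : ∀ᵐ ω ∂P, ∀ m : Fin J,
        (P[ ({ω' | A ω' = m}).indicator (fun _ => (1:ℝ)) | MeasurableSpace.comap Z inferInstance]) ω = π m (Z ω) := by
      rw [ae_all_iff]
      exact hprop
    filter_upwards [this] with ω hω
    simp only [Finset.sum_apply]
    exact Finset.sum_congr rfl fun m _ => hω m
  have hint_f1 : Integrable f1 P := (integrable_const (1:ℝ)).indicator (hA hs)
  have hint_f2 : Integrable f2 P := (integrable_const (1:ℝ)).indicator (hXm ht)
  have hint_cf2 : Integrable (P[f2 | MeasurableSpace.comap Z inferInstance]) P := integrable_condExp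
  -- LHS
  have hinterind : (A ⁻¹' s ∩ X ⁻¹' t).indicator (fun _ => (1:ℝ)) = f1 * f2 := by
    funext ω
    by_cases h1 : ω ∈ A ⁻¹' s <;> by_cases h2 : ω ∈ X ⁻¹' t <;>
      simp [hf1, hf2, Set.indicator_apply, Set.mem_inter_iff, h1, h2]
  have hLHS : P[ (A ⁻¹' s ∩ X ⁻¹' t).indicator (fun _ => (1:ℝ)) | MeasurableSpace.comap S inferInstance]
      =ᵐ[P] fun ω => p ω * (P[f2 | MeasurableSpace.comap S inferInstance]) ω := by
    have step1 : P[ (A ⁻¹' s ∩ X ⁻¹' t).indicator (fun _ => (1:ℝ)) | MeasurableSpace.comap S inferInstance]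
        =ᵐ[P] P[ P[ (A ⁻¹' s ∩ X ⁻¹' t).indicator (fun _ => (1:ℝ)) | MeasurableSpace.comap Z inferInstance] | MeasurableSpace.comap S inferInstance] :=
      (condExp_condExp_of_le hle hZle).symm
    have step2 : P[ (A ⁻¹' s ∩ X ⁻¹' t).indicator (fun _ => (1:ℝ)) | MeasurableSpace.comap Z inferInstance]
        =ᵐ[P] fun ω => p ω * (P[f2 | MeasurableSpace.comap Z inferInstance]) ω := by
      refine (hCI' s t hs ht).trans ?_
      filter_upwards [hcondf1Z] with ω hω
      rw [← hω]
    have step3 : P[ P[ (A ⁻¹' s ∩ X ⁻¹' t).indicator (fun _ => (1:ℝ)) | MeasurableSpace.comap Z inferInstance] | MeasurableSpace.comap S inferInstance]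
        =ᵐ[P] P[ (fun ω => p ω * (P[f2 | MeasurableSpace.comap Z inferInstance]) ω) | MeasurableSpace.comap S inferInstance] := condExp_congr_ae step2
    have hintprod : Integrable (p * (P[f2 | MeasurableSpace.comap Z inferInstance])) P :=
      hint_cf2.bdd_mul (hpS.mono hSle).aestronglyMeasurable (Eventually.of_forall hpbdd)
    have step4 : P[ p * (P[f2 | MeasurableSpace.comap Z inferInstance]) | MeasurableSpace.comap S inferInstance] =ᵐ[P] p * P[ P[f2 | MeasurableSpace.comap Z inferInstance] | MeasurableSpace.comap S inferInstance] :=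
      condExp_mul_of_stronglyMeasurable_left hpS hintprod hint_cf2
    have step5 : P[ P[f2 | MeasurableSpace.comap Z inferInstance] | MeasurableSpace.comap S inferInstance] =ᵐ[P] P[f2 | MeasurableSpace.comap S inferInstance] := condExp_condExp_of_le hle hZle
    refine step1.trans (step3.trans ?_)
    have : P[ (fun ω => p ω * (P[f2 | MeasurableSpace.comap Z inferInstance]) ω) | MeasurableSpace.comap S inferInstance] = P[ p * (P[f2 | MeasurableSpace.comap Z inferInstance]) | MeasurableSpace.comap S inferInstance] := rfl
    rw [this]
    filter_upwards [step4, step5] with ω h4 h5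
    rw [h4]
    simp only [Pi.mul_apply]
    rw [h5]
  -- RHS for f1
  have hcondf1S : P[f1 | MeasurableSpace.comap S inferInstance] =ᵐ[P] p := by
    have step1 : P[f1 | MeasurableSpace.comap S inferInstance] =ᵐ[P] P[ P[f1 | MeasurableSpace.comap Z inferInstance] | MeasurableSpace.comap S inferInstance] :=
      (condExp_condExp_of_le hle hZle).symm
    have step2 : P[ P[f1 | MeasurableSpace.comap Z inferInstance] | MeasurableSpace.comap S inferInstance] =ᵐ[P] P[p | MeasurableSpace.comap S inferInstance] := condExp_congr_ae hcondf1Z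
    have step3 : P[p | MeasurableSpace.comap S inferInstance] = p := by
      refine condExp_of_stronglyMeasurable hSle hpS ?_
      exact (integrable_const ((J:ℝ))).mono' (hpS.mono hSle).aestronglyMeasurable
        (Eventually.of_forall fun ω => by simpa using hpbdd ω)
    exact step1.trans (step2.trans (by rw [step3]))
  rw [hinterind] at hLHS ⊢
  filter_upwards [hLHS, hcondf1S] with ω h1 h2
  rw [h1, h2]
end
end

section
/- Under Assumption 1, if E_jk[ε_jk²/π_j(Z)] < ∞, then conditional on the ECE event the augmented inverse-probability-weighted influence term satisfies Var_jk( 1{A = j} ε_jk / π_j(Z) + μ_jk(X) ) = E_jk[ ε_jk² / π_j(Z) ] + λ_jk − δ_jk². -/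
open MeasureTheory ProbabilityTheory Filter Set
open MeasurableSpace
open scoped NNReal ENNReal

noncomputable section

section AuxLemmas

variable {Ω 𝓩 𝓑 : Type*} [mΩ : MeasurableSpace Ω] [StandardBorelSpace Ω]
  [MeasurableSpace 𝓩] [MeasurableSpace 𝓑]

lemma aux_core (P : Measure Ω) [IsProbabilityMeasure P]
    {J : ℕ} (A : Ω → Fin J) (hA : Measurable A) (j : Fin J)
    (Z : Ω → 𝓩) (hZ : Measurable Z) (V : Ω → 𝓑) (hV : Measurable V)
    (hCI : CondIndepFun (MeasurableSpace.comap Z inferInstance) hZ.comap_le A V P)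
    (p : 𝓩 → ℝ) (hp : Measurable p) (hp0 : ∀ z, 0 ≤ p z) (hp1 : ∀ z, p z ≤ 1)
    (hprop : (P[ Set.indicator {ω' | A ω' = j} (fun _ => (1:ℝ)) | MeasurableSpace.comap Z inferInstance])
        =ᵐ[P] fun ω => p (Z ω)) :
    ∀ s : Set Ω, MeasurableSet[MeasurableSpace.comap (fun ω => (Z ω, V ω)) inferInstance] s →
      ∫ ω in s, Set.indicator {ω' | A ω' = j} (fun _ => (1:ℝ)) ω ∂P
        = ∫ ω in s, p (Z ω) ∂P := by
  have hAj : MeasurableSet {ω' | A ω' = j} := hA (measurableSet_singleton j)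
  have hImeas : Measurable (Set.indicator {ω' | A ω' = j} (fun _ => (1:ℝ))) :=
    measurable_one.indicator hAj
  have hIint : Integrable (Set.indicator {ω' | A ω' = j} (fun _ => (1:ℝ))) P :=
    (integrable_const (1:ℝ)).indicator hAj
  have hpZint : Integrable (fun ω => p (Z ω)) P := by
    refine (integrable_const (1:ℝ)).mono' ((hp.comp hZ).aestronglyMeasurable) ?_
    filter_upwards with ω
    rw [Real.norm_eq_abs, abs_of_nonneg (hp0 _)]
    exact hp1 _
  have hmZle : MeasurableSpace.comap Z inferInstance ≤ mΩ := hZ.comap_le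
  have hpZsm : StronglyMeasurable[MeasurableSpace.comap Z inferInstance] (fun ω => p (Z ω)) :=
    Measurable.stronglyMeasurable (hp.comp (Measurable.of_comap_le le_rfl))
  -- basic case: rectangles
  have hbasic : ∀ (B : Set 𝓩) (C : Set 𝓑), MeasurableSet B → MeasurableSet C →
      ∫ ω in Z ⁻¹' B ∩ V ⁻¹' C, Set.indicator {ω' | A ω' = j} (fun _ => (1:ℝ)) ω ∂P
        = ∫ ω in Z ⁻¹' B ∩ V ⁻¹' C, p (Z ω) ∂P := by
    intro B C hB hC
    have hZB : MeasurableSet[MeasurableSpace.comap Z inferInstance] (Z ⁻¹' B) := ⟨B, hB, rfl⟩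
    have hVC : MeasurableSet (V ⁻¹' C) := hV hC
    have hCIab := (condIndepFun_iff_condExp_inter_preimage_eq_mul (μ := P)
        (hm' := hZ.comap_le) hA hV).mp hCI {j} C (measurableSet_singleton j) hC
    have hintAC : Integrable ((A ⁻¹' {j} ∩ V ⁻¹' C).indicator (fun _ => (1:ℝ))) P :=
      (integrable_const (1:ℝ)).indicator ((hA (measurableSet_singleton j)).inter hVC)
    have hindC : Integrable ((V ⁻¹' C).indicator (fun _ => (1:ℝ))) P :=
      (integrable_const (1:ℝ)).indicator hVC
    have hmul : Integrable (fun ω => p (Z ω) * (V ⁻¹' C).indicator (fun _ => (1:ℝ)) ω) P := by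
      refine hindC.bdd_mul (c := 1) ((hp.comp hZ).aestronglyMeasurable) (Filter.Eventually.of_forall fun ω => ?_)
      rw [Real.norm_eq_abs, abs_of_nonneg (hp0 _)]; exact hp1 _
    have hpull : (P[fun ω => p (Z ω) * (V ⁻¹' C).indicator (fun _ => (1:ℝ)) ω
          | MeasurableSpace.comap Z inferInstance])
        =ᵐ[P] fun ω => p (Z ω) * (P[(V ⁻¹' C).indicator (fun _ => (1:ℝ))
          | MeasurableSpace.comap Z inferInstance]) ω := by
      have := condExp_mul_of_stronglyMeasurable_left (μ := P) hpZsm hmul hindC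
      exact this
    have h1 : ∫ ω in Z ⁻¹' B ∩ V ⁻¹' C, Set.indicator {ω' | A ω' = j} (fun _ => (1:ℝ)) ω ∂P
        = ∫ ω in Z ⁻¹' B, (A ⁻¹' {j} ∩ V ⁻¹' C).indicator (fun _ => (1:ℝ)) ω ∂P := by
      rw [← setIntegral_indicator hVC]
      congr 1
      rw [Set.indicator_indicator, Set.inter_comm]
      rfl
    have h5 : ∫ ω in Z ⁻¹' B ∩ V ⁻¹' C, p (Z ω) ∂P
        = ∫ ω in Z ⁻¹' B, p (Z ω) * (V ⁻¹' C).indicator (fun _ => (1:ℝ)) ω ∂P := by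
      rw [← setIntegral_indicator hVC]
      apply setIntegral_congr_ae (hmZle _ hZB)
      filter_upwards with ω _
      by_cases hω : ω ∈ V ⁻¹' C <;> simp [hω]
    rw [h1, h5]
    rw [← setIntegral_condExp hmZle hintAC hZB, ← setIntegral_condExp hmZle hmul hZB]
    apply setIntegral_congr_ae (hmZle _ hZB)
    filter_upwards [hCIab, hprop, hpull] with ω h₁ h₂ h₃ _
    · have h₂' : (P[(A ⁻¹' {j}).indicator (fun _ => (1:ℝ))|MeasurableSpace.comap Z inferInstance]) ω
          = p (Z ω) := h₂
      rw [h₁, h₃, h₂']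
  -- extend by Dynkin's π-λ theorem
  have hgen : (MeasurableSpace.comap (fun ω => (Z ω, V ω)) inferInstance : MeasurableSpace Ω)
      = MeasurableSpace.generateFrom
        (Set.preimage (fun ω => (Z ω, V ω)) ''
          (Set.image2 (· ×ˢ ·) { s : Set 𝓩 | MeasurableSet s } { t : Set 𝓑 | MeasurableSet t })) := by
    conv_lhs => rw [← generateFrom_prod]
    exact MeasurableSpace.comap_generateFrom
  have hpi : IsPiSystem (Set.preimage (fun ω => (Z ω, V ω)) ''
      (Set.image2 (· ×ˢ ·) { s : Set 𝓩 | MeasurableSet s } { t : Set 𝓑 | MeasurableSet t })) :=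
    isPiSystem_prod.comap _
  have htot : ∫ ω, Set.indicator {ω' | A ω' = j} (fun _ => (1:ℝ)) ω ∂P = ∫ ω, p (Z ω) ∂P := by
    have := hbasic Set.univ Set.univ MeasurableSet.univ MeasurableSet.univ
    simpa using this
  intro s hs
  refine MeasurableSpace.induction_on_inter (m := MeasurableSpace.comap (fun ω => (Z ω, V ω)) inferInstance)
    (C := fun s _ => ∫ ω in s, Set.indicator {ω' | A ω' = j} (fun _ => (1:ℝ)) ω ∂P
        = ∫ ω in s, p (Z ω) ∂P) hgen hpi (by simp) ?_ ?_ ?_ s hs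
  · rintro t ⟨u, ⟨B, hB, C, hC, rfl⟩, rfl⟩
    rw [Set.mk_preimage_prod]
    exact hbasic B C hB hC
  · intro t htm ht
    have htm' : MeasurableSet t := (hZ.prodMk hV).comap_le _ htm
    have e1 := integral_add_compl htm' hIint
    have e2 := integral_add_compl htm' hpZint
    rw [htot] at e1
    linarith [e1, e2, ht]
  · intro f hdisj hfm hf
    have hfm' : ∀ i, MeasurableSet (f i) := fun i => (hZ.prodMk hV).comap_le _ (hfm i)
    rw [integral_iUnion hfm' hdisj hIint.integrableOn,
      integral_iUnion hfm' hdisj hpZint.integrableOn]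
    exact tsum_congr hf

lemma aux_transfer (P : Measure Ω) [IsProbabilityMeasure P]
    {J : ℕ} (A : Ω → Fin J) (hA : Measurable A) (j : Fin J)
    (Z : Ω → 𝓩) (hZ : Measurable Z) (V : Ω → 𝓑) (hV : Measurable V)
    (hCI : CondIndepFun (MeasurableSpace.comap Z inferInstance) hZ.comap_le A V P)
    (p : 𝓩 → ℝ) (hp : Measurable p) (hp0 : ∀ z, 0 ≤ p z) (hp1 : ∀ z, p z ≤ 1)
    (hprop : (P[ Set.indicator {ω' | A ω' = j} (fun _ => (1:ℝ)) | MeasurableSpace.comap Z inferInstance])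
        =ᵐ[P] fun ω => p (Z ω)) :
    (∀ h : Ω → ℝ, StronglyMeasurable[MeasurableSpace.comap (fun ω => (Z ω, V ω)) inferInstance] h →
      ∫ ω, Set.indicator {ω' | A ω' = j} (fun _ => (1:ℝ)) ω * h ω ∂P
        = ∫ ω, p (Z ω) * h ω ∂P)
    ∧ (∀ g : Ω → ℝ≥0∞, Measurable[MeasurableSpace.comap (fun ω => (Z ω, V ω)) inferInstance] g →
      ∫⁻ ω, Set.indicator {ω' | A ω' = j} (fun _ => (1:ℝ≥0∞)) ω * g ω ∂P
        = ∫⁻ ω, ENNReal.ofReal (p (Z ω)) * g ω ∂P) := by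
  have hcore := aux_core P A hA j Z hZ V hV hCI p hp hp0 hp1 hprop
  have hm : (MeasurableSpace.comap (fun ω => (Z ω, V ω)) inferInstance : MeasurableSpace Ω) ≤ mΩ :=
    (hZ.prodMk hV).comap_le
  have hAj : MeasurableSet {ω' | A ω' = j} := hA (measurableSet_singleton j)
  have hIint : Integrable (Set.indicator {ω' | A ω' = j} (fun _ => (1:ℝ))) P :=
    (integrable_const (1:ℝ)).indicator hAj
  have hpZint : Integrable (fun ω => p (Z ω)) P := by
    refine (integrable_const (1:ℝ)).mono' ((hp.comp hZ).aestronglyMeasurable) ?_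
    filter_upwards with ω
    rw [Real.norm_eq_abs, abs_of_nonneg (hp0 _)]
    exact hp1 _
  -- densities
  set dI : Ω → ℝ≥0 := Set.indicator {ω' | A ω' = j} (fun _ => (1:ℝ≥0)) with hdI
  set dp : Ω → ℝ≥0 := fun ω => (p (Z ω)).toNNReal with hdp
  have hdImeas : Measurable dI := measurable_one.indicator hAj
  have hdpmeas : Measurable dp := (hp.comp hZ).real_toNNReal
  set ν₁ : Measure Ω := P.withDensity (fun ω => (dI ω : ℝ≥0∞)) with hν₁
  set ν₂ : Measure Ω := P.withDensity (fun ω => (dp ω : ℝ≥0∞)) with hν₂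
  have hcoeI : ∀ ω, ((dI ω : ℝ≥0) : ℝ≥0∞) = ENNReal.ofReal (Set.indicator {ω' | A ω' = j} (fun _ => (1:ℝ)) ω) := by
    intro ω
    by_cases hω : ω ∈ {ω' | A ω' = j} <;> simp [hdI, hω]
  have hcoep : ∀ ω, ((dp ω : ℝ≥0) : ℝ≥0∞) = ENNReal.ofReal (p (Z ω)) := fun ω => rfl
  have hνeq : ∀ s : Set Ω,
      MeasurableSet[MeasurableSpace.comap (fun ω => (Z ω, V ω)) inferInstance] s →
      ν₁ s = ν₂ s := by
    intro s hs
    have hs' : MeasurableSet s := hm _ hs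
    rw [hν₁, hν₂, withDensity_apply _ hs', withDensity_apply _ hs']
    have e1 : ∫⁻ ω in s, ((dI ω : ℝ≥0) : ℝ≥0∞) ∂P
        = ENNReal.ofReal (∫ ω in s, Set.indicator {ω' | A ω' = j} (fun _ => (1:ℝ)) ω ∂P) := by
      rw [ofReal_integral_eq_lintegral_ofReal hIint.integrableOn
        (Filter.Eventually.of_forall fun ω => Set.indicator_nonneg (fun _ _ => zero_le_one) ω)]
      simp_rw [hcoeI]
    have e2 : ∫⁻ ω in s, ((dp ω : ℝ≥0) : ℝ≥0∞) ∂P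
        = ENNReal.ofReal (∫ ω in s, p (Z ω) ∂P) := by
      rw [ofReal_integral_eq_lintegral_ofReal hpZint.integrableOn
        (Filter.Eventually.of_forall fun ω => hp0 _)]
      rfl
    rw [e1, e2, hcore s hs]
  have htrim : ν₁.trim hm = ν₂.trim hm := by
    refine @MeasureTheory.Measure.ext Ω
      (MeasurableSpace.comap (fun ω => (Z ω, V ω)) inferInstance) _ _ (fun s hs => ?_)
    rw [trim_measurableSet_eq hm hs, trim_measurableSet_eq hm hs]
    exact hνeq s hs
  constructor
  · intro h hh
    have e1 : ∫ ω, Set.indicator {ω' | A ω' = j} (fun _ => (1:ℝ)) ω * h ω ∂P = ∫ ω, h ω ∂ν₁ := by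
      rw [hν₁, integral_withDensity_eq_integral_smul hdImeas]
      congr 1
      funext ω
      by_cases hω : ω ∈ {ω' | A ω' = j} <;> simp [hdI, hω]
    have e2 : ∫ ω, p (Z ω) * h ω ∂P = ∫ ω, h ω ∂ν₂ := by
      rw [hν₂, integral_withDensity_eq_integral_smul hdpmeas]
      congr 1
      funext ω
      simp [hdp, NNReal.smul_def, Real.coe_toNNReal _ (hp0 _)]
    have t1 : ∫ ω, h ω ∂ν₁ = ∫ ω, h ω ∂(ν₁.trim hm) := integral_trim hm hh
    have t2 : ∫ ω, h ω ∂ν₂ = ∫ ω, h ω ∂(ν₂.trim hm) := integral_trim hm hh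
    rw [e1, e2, t1, t2, htrim]
  · intro g hg
    have hg' : Measurable g := hg.mono hm le_rfl
    have e1 : ∫⁻ ω, Set.indicator {ω' | A ω' = j} (fun _ => (1:ℝ≥0∞)) ω * g ω ∂P
        = ∫⁻ ω, g ω ∂ν₁ := by
      rw [hν₁, lintegral_withDensity_eq_lintegral_mul P (hdImeas.coe_nnreal_ennreal) hg']
      congr 1
      funext ω
      by_cases hω : ω ∈ {ω' | A ω' = j} <;> simp [hdI, hω]
    have e2 : ∫⁻ ω, ENNReal.ofReal (p (Z ω)) * g ω ∂P = ∫⁻ ω, g ω ∂ν₂ := by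
      rw [hν₂, lintegral_withDensity_eq_lintegral_mul P (hdpmeas.coe_nnreal_ennreal) hg']
      rfl
    have t1 : ∫⁻ ω, g ω ∂(ν₁.trim hm) = ∫⁻ ω, g ω ∂ν₁ := lintegral_trim hm hg
    have t2 : ∫⁻ ω, g ω ∂(ν₂.trim hm) = ∫⁻ ω, g ω ∂ν₂ := lintegral_trim hm hg
    rw [e1, e2, ← t1, ← t2, htrim]

end AuxLemmas

/-- variance of the AIPW influence term. -/
theorem stmt_7
    {Ω 𝓩 𝓦 : Type*} [MeasurableSpace Ω] [StandardBorelSpace Ω]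
    [MeasurableSpace 𝓩] [MeasurableSpace 𝓦]
    (P : Measure Ω) [IsProbabilityMeasure P]
    {J : ℕ} (Z : Ω → 𝓩) (W : Ω → 𝓦) (A : Ω → Fin J) (Y : Fin J → Ω → ℝ)
    (hZ : Measurable Z) (hW : Measurable W) (hA : Measurable A)
    (hY : ∀ m, Measurable (Y m)) (hY2 : ∀ m, MemLp (Y m) 2 P)
    (π : Fin J → 𝓩 → ℝ) (hπmeas : ∀ m, Measurable (π m))
    (hπ01 : ∀ m z, π m z ∈ Set.Icc (0:ℝ) 1)
    (hπsum : ∀ z, ∑ m, π m z = 1)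
    -- Assumption 1: A ⟂ (W, Y^(1),…,Y^(J)) given Z
    (hCI : CondIndepFun (MeasurableSpace.comap Z inferInstance) hZ.comap_le A
        (fun ω => (W ω, fun m => Y m ω)) P)
    -- Assumption 1: P(A = m | Z) = π_m(Z) a.s.
    (hprop : ∀ m : Fin J,
      (P[ Set.indicator {ω' | A ω' = m} (fun _ => (1:ℝ)) | MeasurableSpace.comap Z inferInstance])
        =ᵐ[P] fun ω => π m (Z ω))
    (j k : Fin J) (hjk : j ≠ k)
    -- the ECE event, with positive probability
    (ECE : Set Ω) (hECE : ECE = {ω | 0 < π j (Z ω) ∧ 0 < π k (Z ω)})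
    (hECEpos : P ECE ≠ 0)
    -- working model: a covariate sub-vector X of W and a function μjk of X
    {𝓧 : Type*} [MeasurableSpace 𝓧]
    (X : Ω → 𝓧) (hXW : ∃ g : 𝓦 → 𝓧, Measurable g ∧ ∀ ω, X ω = g (W ω))
    (μjk : 𝓧 → ℝ) (hμjkm : Measurable μjk) (hμjk2 : MemLp (fun ω => μjk (X ω)) 2 P)
    -- residual, its conditional mean, and λ_jk
    (εjk : Ω → ℝ) (hεjk : ∀ ω, εjk ω = Y j ω - μjk (X ω))
    (δjk : ℝ) (hδjk : δjk = ∫ ω, εjk ω ∂P[|ECE])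
    (lamjk : ℝ) (hlamjk : lamjk = variance (Y j) P[|ECE] - variance εjk P[|ECE])
    -- finiteness of E_jk[ε_jk²/π_j(Z)]
    (hInt : Integrable (fun ω => εjk ω ^ 2 / π j (Z ω)) P[|ECE]) :
    variance
        (fun ω => Set.indicator {ω' | A ω' = j} (fun ω' => εjk ω' / π j (Z ω')) ω + μjk (X ω))
        P[|ECE]
      = (∫ ω, εjk ω ^ 2 / π j (Z ω) ∂P[|ECE]) + lamjk - δjk ^ 2 := by
  classical
  obtain ⟨gX, hgXmeas, hXg⟩ := hXW
  set V : Ω → 𝓦 × (Fin J → ℝ) := fun ω => (W ω, fun m => Y m ω) with hVdef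
  have hV : Measurable V := hW.prodMk (measurable_pi_lambda _ fun m => hY m)
  obtain ⟨Hre, Hlin⟩ := aux_transfer P A hA j Z hZ V hV hCI (π j) (hπmeas j)
    (fun z => (hπ01 j z).1) (fun z => (hπ01 j z).2) (hprop j)
  have hm : (MeasurableSpace.comap (fun ω => (Z ω, V ω)) inferInstance : MeasurableSpace Ω)
      ≤ ‹MeasurableSpace Ω› := (hZ.prodMk hV).comap_le
  -- m-measurability of the relevant functions
  have hUm : Measurable[MeasurableSpace.comap (fun ω => (Z ω, V ω)) inferInstance]
      (fun ω => (Z ω, V ω)) := Measurable.of_comap_le le_rfl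
  have hZm : Measurable[MeasurableSpace.comap (fun ω => (Z ω, V ω)) inferInstance] Z :=
    measurable_fst.comp hUm
  have hWm : Measurable[MeasurableSpace.comap (fun ω => (Z ω, V ω)) inferInstance] W :=
    (measurable_fst.comp (measurable_snd.comp hUm))
  have hYm : ∀ i, Measurable[MeasurableSpace.comap (fun ω => (Z ω, V ω)) inferInstance] (Y i) :=
    fun i => (measurable_pi_apply i).comp (measurable_snd.comp (measurable_snd.comp hUm))
  have hXm : Measurable[MeasurableSpace.comap (fun ω => (Z ω, V ω)) inferInstance] X := by
    have hXeq : X = fun ω => gX (W ω) := funext hXg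
    rw [hXeq]; exact hgXmeas.comp hWm
  have hεm : Measurable[MeasurableSpace.comap (fun ω => (Z ω, V ω)) inferInstance] εjk := by
    have hεeq : εjk = fun ω => Y j ω - μjk (X ω) := funext hεjk
    rw [hεeq]; exact (hYm j).sub (hμjkm.comp hXm)
  have hπZm : Measurable[MeasurableSpace.comap (fun ω => (Z ω, V ω)) inferInstance]
      (fun ω => π j (Z ω)) := (hπmeas j).comp hZm
  have hECEm : MeasurableSet[MeasurableSpace.comap (fun ω => (Z ω, V ω)) inferInstance] ECE := by
    rw [hECE]
    exact (((hπmeas j).comp hZm) measurableSet_Ioi).inter (((hπmeas k).comp hZm) measurableSet_Ioi)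
  have hECEmeas : MeasurableSet ECE := hm _ hECEm
  have hεmeas : Measurable εjk := hεm.mono hm le_rfl
  have hμXmeas : Measurable (fun ω => μjk (X ω)) := by
    have hXeq : X = fun ω => gX (W ω) := funext hXg
    rw [hXeq]; exact hμjkm.comp (hgXmeas.comp hW)
  have hAj : MeasurableSet {ω' | A ω' = j} := hA (measurableSet_singleton j)
  -- the conditional measure
  have hQdef : P[|ECE] = (P ECE)⁻¹ • P.restrict ECE := rfl
  haveI hQprob : IsProbabilityMeasure P[|ECE] := cond_isProbabilityMeasure hECEpos
  have hcinvne : (P ECE)⁻¹ ≠ ∞ := ENNReal.inv_ne_top.mpr hECEpos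
  have hae : ∀ᵐ ω ∂P[|ECE], ω ∈ ECE := by
    rw [hQdef]; exact Measure.ae_smul_measure (ae_restrict_mem hECEmeas) _
  have haeπ : ∀ᵐ ω ∂P[|ECE], π j (Z ω) ≠ 0 := by
    filter_upwards [hae] with ω hω
    rw [hECE] at hω
    exact ne_of_gt hω.1
  have hQle : P[|ECE] ≤ (P ECE)⁻¹ • P := by
    rw [hQdef]
    refine Measure.le_iff.mpr fun s hs => ?_
    rw [Measure.smul_apply, Measure.smul_apply, Measure.restrict_apply hs]
    exact mul_le_mul_right (measure_mono Set.inter_subset_left) _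
  have hMemQ : ∀ {f : Ω → ℝ}, MemLp f 2 P → MemLp f 2 P[|ECE] :=
    fun hf => MemLp.of_measure_le_smul hcinvne hQle hf
  -- integral transfer between P[|ECE] and P
  have hQint : ∀ f : Ω → ℝ, ∫ ω, f ω ∂P[|ECE]
      = (P ECE).toReal⁻¹ * ∫ ω, ECE.indicator f ω ∂P := by
    intro f
    rw [hQdef, integral_smul_measure, integral_indicator hECEmeas, smul_eq_mul,
      ENNReal.toReal_inv]
  -- the Q-level real transfer
  have QT : ∀ h : Ω → ℝ,
      StronglyMeasurable[MeasurableSpace.comap (fun ω => (Z ω, V ω)) inferInstance] h →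
      ∫ ω, Set.indicator {ω' | A ω' = j} (fun _ => (1:ℝ)) ω * h ω ∂P[|ECE]
        = ∫ ω, π j (Z ω) * h ω ∂P[|ECE] := by
    intro h hh
    rw [hQint, hQint]
    congr 1
    have e1 : (ECE.indicator fun ω => Set.indicator {ω' | A ω' = j} (fun _ => (1:ℝ)) ω * h ω)
        = fun ω => Set.indicator {ω' | A ω' = j} (fun _ => (1:ℝ)) ω * ECE.indicator h ω := by
      funext ω
      by_cases hω : ω ∈ ECE <;> simp [hω]
    have e2 : (ECE.indicator fun ω => π j (Z ω) * h ω)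
        = fun ω => π j (Z ω) * ECE.indicator h ω := by
      funext ω
      by_cases hω : ω ∈ ECE <;> simp [hω]
    rw [e1, e2]
    exact Hre (ECE.indicator h) (hh.indicator hECEm)
  -- the AIPW term
  set S : Ω → ℝ := Set.indicator {ω' | A ω' = j} (fun ω' => εjk ω' / π j (Z ω')) with hSdef
  have hSmeas : Measurable S := (hεmeas.div ((hπmeas j).comp hZ)).indicator hAj
  have hSI : ∀ ω, S ω = Set.indicator {ω' | A ω' = j} (fun _ => (1:ℝ)) ω * (εjk ω / π j (Z ω)) := by
    intro ω
    by_cases hω : ω ∈ {ω' | A ω' = j} <;> simp [hSdef, Set.indicator_apply, hω]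
  -- MemLp of S under the conditional measure
  set gE : Ω → ℝ≥0∞ :=
    ECE.indicator (fun ω => ENNReal.ofReal (εjk ω ^ 2 / π j (Z ω) ^ 2)) with hgEdef
  have hgEm : Measurable[MeasurableSpace.comap (fun ω => (Z ω, V ω)) inferInstance] gE :=
    (((hεm.pow_const 2).div (hπZm.pow_const 2)).ennreal_ofReal).indicator hECEm
  have hS2fin : HasFiniteIntegral (fun ω => S ω ^ 2) P[|ECE] := by
    show (∫⁻ ω, (‖S ω ^ 2‖₊ : ℝ≥0∞) ∂P[|ECE]) < ∞
    have key1 : ∫⁻ ω, (‖S ω ^ 2‖₊ : ℝ≥0∞) ∂P[|ECE]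
        = (P ECE)⁻¹ * ∫⁻ ω, Set.indicator {ω' | A ω' = j} (fun _ => (1:ℝ≥0∞)) ω * gE ω ∂P := by
      rw [hQdef, lintegral_smul_measure, ← lintegral_indicator hECEmeas]
      congr 1
      apply lintegral_congr
      intro ω
      by_cases hω : ω ∈ ECE
      · by_cases hωA : ω ∈ {ω' | A ω' = j}
        · have hSω : S ω = εjk ω / π j (Z ω) := by rw [hSdef, Set.indicator_of_mem hωA]
          rw [Set.indicator_of_mem hω, Set.indicator_of_mem hωA, hgEdef, Set.indicator_of_mem hω,
            one_mul, hSω, ← enorm_eq_nnnorm, Real.enorm_eq_ofReal (sq_nonneg _), div_pow]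
        · have hSω : S ω = 0 := by rw [hSdef, Set.indicator_of_notMem hωA]
          simp [Set.indicator_of_mem hω, Set.indicator_of_notMem hωA, hSω, hgEdef]
      · simp only [Set.indicator_of_notMem hω, hgEdef]
        by_cases hωA : ω ∈ {ω' | A ω' = j}
        · simp [Set.indicator_of_mem hωA, Set.indicator_of_notMem hω]
        · simp [hSdef, Set.indicator_of_notMem hωA, Set.indicator_of_notMem hω]
    have key3 : ∫⁻ ω, ENNReal.ofReal (π j (Z ω)) * gE ω ∂P
        = ∫⁻ ω, ECE.indicator (fun ω' => ENNReal.ofReal (εjk ω' ^ 2 / π j (Z ω'))) ω ∂P := by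
      apply lintegral_congr
      intro ω
      by_cases hω : ω ∈ ECE
      · have hπpos : 0 < π j (Z ω) := by rw [hECE] at hω; exact hω.1
        simp only [hgEdef, Set.indicator_of_mem hω]
        rw [← ENNReal.ofReal_mul (hπ01 j (Z ω)).1]
        congr 1
        field_simp
      · simp [hgEdef, Set.indicator_of_notMem hω]
    calc ∫⁻ ω, (‖S ω ^ 2‖₊ : ℝ≥0∞) ∂P[|ECE]
        = (P ECE)⁻¹ * ∫⁻ ω, Set.indicator {ω' | A ω' = j} (fun _ => (1:ℝ≥0∞)) ω * gE ω ∂P := key1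
      _ = (P ECE)⁻¹ * ∫⁻ ω, ENNReal.ofReal (π j (Z ω)) * gE ω ∂P := by rw [Hlin gE hgEm]
      _ = (P ECE)⁻¹ * ∫⁻ ω, ECE.indicator (fun ω' => ENNReal.ofReal (εjk ω' ^ 2 / π j (Z ω'))) ω ∂P := by
          rw [key3]
      _ = ∫⁻ ω, ENNReal.ofReal (εjk ω ^ 2 / π j (Z ω)) ∂P[|ECE] := by
          rw [hQdef, lintegral_smul_measure, ← lintegral_indicator hECEmeas, smul_eq_mul]
      _ ≤ ∫⁻ ω, (‖εjk ω ^ 2 / π j (Z ω)‖₊ : ℝ≥0∞) ∂P[|ECE] := by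
          apply lintegral_mono
          intro ω
          dsimp only
          rw [← enorm_eq_nnnorm, Real.enorm_eq_ofReal_abs]
          exact ENNReal.ofReal_le_ofReal (le_abs_self _)
      _ < ∞ := hInt.2
  have hS2int : Integrable (fun ω => S ω ^ 2) P[|ECE] :=
    ⟨(hSmeas.pow_const 2).aestronglyMeasurable, hS2fin⟩
  have hSQ : MemLp S 2 P[|ECE] :=
    (memLp_two_iff_integrable_sq hSmeas.aestronglyMeasurable).mpr hS2int
  -- MemLp of the other ingredients under the conditional measure
  have hμXQ : MemLp (fun ω => μjk (X ω)) 2 P[|ECE] := hMemQ hμjk2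
  have hYjQ : MemLp (Y j) 2 P[|ECE] := hMemQ (hY2 j)
  have hεQ : MemLp εjk 2 P[|ECE] := by
    have hεeq : εjk = fun ω => Y j ω - μjk (X ω) := funext hεjk
    rw [hεeq]; exact hYjQ.sub hμXQ
  have hmul2 : ∀ {f g : Ω → ℝ}, MemLp f 2 P[|ECE] → MemLp g 2 P[|ECE] →
      Integrable (fun ω => f ω * g ω) P[|ECE] := by
    intro f g hf hg
    have h1 : (1:ℝ≥0∞)/1 = 1/2 + 1/2 := by
      rw [div_one, one_div, ENNReal.inv_two_add_inv_two]
    have h2 := hg.smul hf (r := 1)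
    have h3 : (f • g) = fun ω => f ω * g ω := by
      funext ω; simp [smul_eq_mul]
    rw [h3] at h2
    exact memLp_one_iff_integrable.mp h2
  have hSint : Integrable S P[|ECE] := hSQ.integrable one_le_two
  have hμXint : Integrable (fun ω => μjk (X ω)) P[|ECE] := hμXQ.integrable one_le_two
  have hεint : Integrable εjk P[|ECE] := hεQ.integrable one_le_two
  have hSμ : Integrable (fun ω => S ω * μjk (X ω)) P[|ECE] := hmul2 hSQ hμXQ
  have hεμ : Integrable (fun ω => εjk ω * μjk (X ω)) P[|ECE] := hmul2 hεQ hμXQ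
  have hμX2 : Integrable (fun ω => μjk (X ω) ^ 2) P[|ECE] := hμXQ.integrable_sq
  have hε2 : Integrable (fun ω => εjk ω ^ 2) P[|ECE] := hεQ.integrable_sq
  -- the three transfer identities
  have hIS : ∫ ω, S ω ∂P[|ECE] = δjk := by
    have e : S = fun ω => Set.indicator {ω' | A ω' = j} (fun _ => (1:ℝ)) ω * (εjk ω / π j (Z ω)) :=
      funext hSI
    rw [e, QT (fun ω => εjk ω / π j (Z ω)) (hεm.div hπZm).stronglyMeasurable, hδjk]
    apply integral_congr_ae
    filter_upwards [haeπ] with ω hω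
    rw [mul_comm, div_mul_cancel₀ _ hω]
  have hIS2 : ∫ ω, S ω ^ 2 ∂P[|ECE] = ∫ ω, εjk ω ^ 2 / π j (Z ω) ∂P[|ECE] := by
    have e : (fun ω => S ω ^ 2)
        = fun ω => Set.indicator {ω' | A ω' = j} (fun _ => (1:ℝ)) ω * (εjk ω ^ 2 / π j (Z ω) ^ 2) := by
      funext ω
      by_cases hωA : ω ∈ {ω' | A ω' = j}
      · have hSω : S ω = εjk ω / π j (Z ω) := by rw [hSdef, Set.indicator_of_mem hωA]
        rw [hSω, Set.indicator_of_mem hωA, one_mul, div_pow]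
      · have hSω : S ω = 0 := by rw [hSdef, Set.indicator_of_notMem hωA]
        rw [hSω, Set.indicator_of_notMem hωA, zero_mul]
        ring
    rw [e, QT (fun ω => εjk ω ^ 2 / π j (Z ω) ^ 2) ((hεm.pow_const 2).div (hπZm.pow_const 2)).stronglyMeasurable]
    apply integral_congr_ae
    filter_upwards [haeπ] with ω hω
    field_simp
  have hISμ : ∫ ω, S ω * μjk (X ω) ∂P[|ECE] = ∫ ω, εjk ω * μjk (X ω) ∂P[|ECE] := by
    have e : (fun ω => S ω * μjk (X ω))
        = fun ω => Set.indicator {ω' | A ω' = j} (fun _ => (1:ℝ)) ω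
            * (εjk ω / π j (Z ω) * μjk (X ω)) := by
      funext ω; rw [hSI ω]; ring
    rw [e, QT (fun ω => εjk ω / π j (Z ω) * μjk (X ω))
      (Measurable.stronglyMeasurable (by exact (hεm.div hπZm).mul (hμjkm.comp hXm)))]
    apply integral_congr_ae
    filter_upwards [haeπ] with ω hω
    field_simp
  -- variance computations
  have hvd : ∀ (f : Ω → ℝ), MemLp f 2 P[|ECE] →
      variance f P[|ECE] = ∫ ω, f ω ^ 2 ∂P[|ECE] - (∫ ω, f ω ∂P[|ECE]) ^ 2 := by
    intro f hf
    rw [variance_eq_sub hf]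
    rfl
  have hT2 : MemLp (fun ω => S ω + μjk (X ω)) 2 P[|ECE] := hSQ.add hμXQ
  have hexpT2 : ∫ ω, (S ω + μjk (X ω)) ^ 2 ∂P[|ECE]
      = ∫ ω, S ω ^ 2 ∂P[|ECE]
        + (2 * ∫ ω, S ω * μjk (X ω) ∂P[|ECE] + ∫ ω, μjk (X ω) ^ 2 ∂P[|ECE]) := by
    have e : (fun ω => (S ω + μjk (X ω)) ^ 2)
        = fun ω => S ω ^ 2 + (2 * (S ω * μjk (X ω)) + μjk (X ω) ^ 2) := by
      funext ω; ring
    have ha : Integrable (fun ω => 2 * (S ω * μjk (X ω))) P[|ECE] := hSμ.const_mul 2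
    have hb : Integrable (fun ω => 2 * (S ω * μjk (X ω)) + μjk (X ω) ^ 2) P[|ECE] := ha.add hμX2
    rw [e, integral_add hS2int hb, integral_add ha hμX2, integral_const_mul 2 _]
  have hexpT1 : ∫ ω, S ω + μjk (X ω) ∂P[|ECE] = δjk + ∫ ω, μjk (X ω) ∂P[|ECE] := by
    rw [integral_add hSint hμXint, hIS]
  have hYeq : Y j = fun ω => εjk ω + μjk (X ω) := by
    funext ω; rw [hεjk]; ring
  have hexpY2 : ∫ ω, Y j ω ^ 2 ∂P[|ECE]
      = ∫ ω, εjk ω ^ 2 ∂P[|ECE]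
        + (2 * ∫ ω, εjk ω * μjk (X ω) ∂P[|ECE] + ∫ ω, μjk (X ω) ^ 2 ∂P[|ECE]) := by
    have e : (fun ω => Y j ω ^ 2)
        = fun ω => εjk ω ^ 2 + (2 * (εjk ω * μjk (X ω)) + μjk (X ω) ^ 2) := by
      funext ω; rw [hYeq]; ring
    have ha : Integrable (fun ω => 2 * (εjk ω * μjk (X ω))) P[|ECE] := hεμ.const_mul 2
    have hb : Integrable (fun ω => 2 * (εjk ω * μjk (X ω)) + μjk (X ω) ^ 2) P[|ECE] := ha.add hμX2
    rw [e, integral_add hε2 hb, integral_add ha hμX2, integral_const_mul 2 _]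
  have hexpY1 : ∫ ω, Y j ω ∂P[|ECE] = δjk + ∫ ω, μjk (X ω) ∂P[|ECE] := by
    conv_lhs => rw [hYeq]
    rw [integral_add hεint hμXint, ← hδjk]
  -- put everything together
  have hvarT := hvd _ hT2
  have hvarY := hvd _ hYjQ
  have hvarε := hvd _ hεQ
  have hgoal : variance (fun ω => S ω + μjk (X ω)) P[|ECE]
      = (∫ ω, εjk ω ^ 2 / π j (Z ω) ∂P[|ECE]) + lamjk - δjk ^ 2 := by
    rw [hvarT, hexpT2, hexpT1, hIS2, hISμ, hlamjk, hvarY, hvarε, hexpY2, hexpY1, ← hδjk]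
    ring
  exact hgoal
end
end

section
/- (Corollary 1.) Under Assumption 1, with E_jk[(Y^(j))²/π_j(Z)] < ∞ and E_jk[(Y^(k))²/π_k(Z)] < ∞, let Σ_ipw = diag( E_jk[(Y^(j))²/π_j(Z)], E_jk[(Y^(k))²/π_k(Z)] ) − ϑϑᵀ with ϑ = (θ_jk, θ_kj)ᵀ, and Σ_sipw = diag( E_jk[(Y^(j)−θ_jk)²/π_j(Z)], E_jk[(Y^(k)−θ_kj)²/π_k(Z)] ). Then Σ_ipw − Σ_sipw = M₁ + M₂, where M₁ is the 2×2 matrix with diagonal entries θ_jk² E_jk[1/π_j(Z) − 1] and θ_kj² E_jk[1/π_k(Z) − 1] and both off-diagonal entries −θ_jk θ_kj, and M₂ = 2 · diag( θ_jk Cov_jk(Y^(j), 1/π_j(Z)), θ_kj Cov_jk(Y^(k), 1/π_k(Z)) ). Moreover, if π_j(Z) + π_k(Z) ≤ 1 almost surely on the ECE event, then M₁ is positive semidefinite; and if additionally θ_jk Cov_jk(Y^(j), 1/π_j(Z)) ≥ 0 and θ_kj Cov_jk(Y^(k), 1/π_k(Z)) ≥ 0, then Σ_ipw − Σ_sipw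 is positive semidefinite. -/
open MeasureTheory ProbabilityTheory Filter Set

noncomputable section

/-- Covariance of two real-valued random variables under the measure `μ`. -/
def cov {Ω : Type*} [MeasurableSpace Ω] (μ : Measure Ω) (f g : Ω → ℝ) : ℝ :=
  ∫ ω, (f ω - ∫ x, f x ∂μ) * (g ω - ∫ x, g x ∂μ) ∂μ

lemma cov_eq {Ω : Type*} [MeasurableSpace Ω] (μ : Measure Ω) [IsProbabilityMeasure μ]
    {f g : Ω → ℝ} (hf : Integrable f μ) (hg : Integrable g μ)
    (hfg : Integrable (fun ω => f ω * g ω) μ) :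
    cov μ f g = (∫ ω, f ω * g ω ∂μ) - (∫ ω, f ω ∂μ) * (∫ ω, g ω ∂μ) := by
  unfold cov
  have hexp : ∀ ω, (f ω - ∫ x, f x ∂μ) * (g ω - ∫ x, g x ∂μ)
      = f ω * g ω - (∫ x, f x ∂μ) * g ω - (∫ x, g x ∂μ) * f ω
        + (∫ x, f x ∂μ) * (∫ x, g x ∂μ) := by intro ω; ring
  simp_rw [hexp]
  have hA : Integrable (fun ω => f ω * g ω - (∫ x, f x ∂μ) * g ω) μ :=
    hfg.sub (hg.const_mul _)
  have hB : Integrable (fun ω => f ω * g ω - (∫ x, f x ∂μ) * g ω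
      - (∫ x, g x ∂μ) * f ω) μ := hA.sub (hf.const_mul _)
  rw [integral_add hB (integrable_const _), integral_sub hA (hf.const_mul _),
    integral_sub hfg (hg.const_mul _), integral_const_mul, integral_const_mul,
    integral_const, probReal_univ]
  simp; ring

lemma arm {Ω : Type*} [MeasurableSpace Ω] (μ : Measure Ω) [IsProbabilityMeasure μ]
    (f p : Ω → ℝ) (θ : ℝ) (hθ : θ = ∫ ω, f ω ∂μ)
    (hf : Integrable f μ)
    (h2 : Integrable (fun ω => f ω ^ 2 / p ω) μ)
    (h1 : Integrable (fun ω => 1 / p ω) μ)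
    (hfp : Integrable (fun ω => f ω / p ω) μ) :
    (∫ ω, f ω ^ 2 / p ω ∂μ) - θ * θ - ∫ ω, (f ω - θ) ^ 2 / p ω ∂μ
      = θ ^ 2 * (∫ ω, (1 / p ω - 1) ∂μ) + 2 * (θ * cov μ f (fun ω => 1 / p ω)) := by
  have hcov : cov μ f (fun ω => 1 / p ω)
      = (∫ ω, f ω / p ω ∂μ) - (∫ ω, f ω ∂μ) * (∫ ω, 1 / p ω ∂μ) := by
    have := cov_eq μ hf h1 (f := f) (g := fun ω => 1 / p ω)
      (hfp.congr (by filter_upwards with ω using (mul_one_div _ _).symm))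
    simp_rw [mul_one_div] at this
    exact this
  have hexp : ∀ ω, (f ω - θ) ^ 2 / p ω
      = f ω ^ 2 / p ω - 2 * θ * (f ω / p ω) + θ ^ 2 * (1 / p ω) := by
    intro ω; field_simp; ring
  simp_rw [hexp]
  have hA : Integrable (fun ω => f ω ^ 2 / p ω - 2 * θ * (f ω / p ω)) μ :=
    h2.sub (hfp.const_mul _)
  rw [integral_add hA (h1.const_mul _),
    integral_sub h2 (hfp.const_mul _), integral_const_mul, integral_const_mul,
    integral_sub h1 (integrable_const _), integral_const, probReal_univ, hcov, ← hθ]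
  simp; ring

lemma quad_nonneg (u v s t : ℝ) (hs : 0 < s) (ht : 0 < t) (hst : s + t ≤ 1) :
    0 ≤ u ^ 2 * (1 / s - 1) + v ^ 2 * (1 / t - 1) - 2 * u * v := by
  have h1 : t / s ≤ 1 / s - 1 := by
    rw [div_le_iff₀ hs, sub_mul, one_div, inv_mul_cancel₀ hs.ne']; linarith
  have h2 : s / t ≤ 1 / t - 1 := by
    rw [div_le_iff₀ ht, sub_mul, one_div, inv_mul_cancel₀ ht.ne']; linarith
  have key : 0 ≤ u ^ 2 * (t / s) + v ^ 2 * (s / t) - 2 * u * v := by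
    have heq : u ^ 2 * (t / s) + v ^ 2 * (s / t) - 2 * u * v
        = (u * t - v * s) ^ 2 / (s * t) := by field_simp; ring
    rw [heq]; positivity
  nlinarith [mul_le_mul_of_nonneg_left h1 (sq_nonneg u),
    mul_le_mul_of_nonneg_left h2 (sq_nonneg v)]

lemma posSemidef_add {n : Type*} [Fintype n] {A B : Matrix n n ℝ}
    (hA : A.PosSemidef) (hB : B.PosSemidef) : (A + B).PosSemidef := by
  refine Matrix.PosSemidef.of_dotProduct_mulVec_nonneg (hA.1.add hB.1) fun x => ?_
  have := add_nonneg (hA.dotProduct_mulVec_nonneg x) (hB.dotProduct_mulVec_nonneg x)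
  simpa [Matrix.add_mulVec, dotProduct_add] using this

/-- Corollary 1: decomposition of Σ_ipw − Σ_sipw and positive
semidefiniteness. -/
theorem stmt_11
    {Ω 𝓩 𝓦 : Type*} [MeasurableSpace Ω] [StandardBorelSpace Ω]
    [MeasurableSpace 𝓩] [MeasurableSpace 𝓦]
    (P : Measure Ω) [IsProbabilityMeasure P]
    {J : ℕ} (Z : Ω → 𝓩) (W : Ω → 𝓦) (A : Ω → Fin J) (Y : Fin J → Ω → ℝ)
    (hZ : Measurable Z) (hW : Measurable W) (hA : Measurable A)
    (hY : ∀ m, Measurable (Y m)) (hY2 : ∀ m, MemLp (Y m) 2 P)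
    (π : Fin J → 𝓩 → ℝ) (hπmeas : ∀ m, Measurable (π m))
    (hπ01 : ∀ m z, π m z ∈ Set.Icc (0:ℝ) 1)
    (hπsum : ∀ z, ∑ m, π m z = 1)
    -- Assumption 1: A ⟂ (W, Y^(1),…,Y^(J)) given Z
    (hCI : CondIndepFun (MeasurableSpace.comap Z inferInstance) hZ.comap_le A
        (fun ω => (W ω, fun m => Y m ω)) P)
    -- Assumption 1: P(A = m | Z) = π_m(Z) a.s.
    (hprop : ∀ m : Fin J,
      (P[ Set.indicator {ω' | A ω' = m} (fun _ => (1:ℝ)) | MeasurableSpace.comap Z inferInstance])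
        =ᵐ[P] fun ω => π m (Z ω))
    (j k : Fin J) (hjk : j ≠ k)
    -- the ECE event, with positive probability
    (ECE : Set Ω) (hECE : ECE = {ω | 0 < π j (Z ω) ∧ 0 < π k (Z ω)})
    (hECEpos : P ECE ≠ 0)
    -- θ_jk and θ_kj
    (θjk θkj : ℝ) (hθjk : θjk = ∫ ω, Y j ω ∂P[|ECE]) (hθkj : θkj = ∫ ω, Y k ω ∂P[|ECE])
    -- finiteness of the displayed conditional moments
    (hIntj : Integrable (fun ω => (Y j ω) ^ 2 / π j (Z ω)) P[|ECE])
    (hIntk : Integrable (fun ω => (Y k ω) ^ 2 / π k (Z ω)) P[|ECE])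
    (hIntj1 : Integrable (fun ω => 1 / π j (Z ω)) P[|ECE])
    (hIntk1 : Integrable (fun ω => 1 / π k (Z ω)) P[|ECE])
    (hIntjY : Integrable (fun ω => Y j ω / π j (Z ω)) P[|ECE])
    (hIntkY : Integrable (fun ω => Y k ω / π k (Z ω)) P[|ECE])
    -- the matrices
    (Sipw Ssipw M₁ M₂ : Matrix (Fin 2) (Fin 2) ℝ)
    (hSipw : Sipw =
      !![(∫ ω, (Y j ω) ^ 2 / π j (Z ω) ∂P[|ECE]) - θjk * θjk, -(θjk * θkj);
         -(θjk * θkj), (∫ ω, (Y k ω) ^ 2 / π k (Z ω) ∂P[|ECE]) - θkj * θkj])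
    (hSsipw : Ssipw =
      !![∫ ω, (Y j ω - θjk) ^ 2 / π j (Z ω) ∂P[|ECE], 0;
         0, ∫ ω, (Y k ω - θkj) ^ 2 / π k (Z ω) ∂P[|ECE]])
    (hM₁ : M₁ =
      !![θjk ^ 2 * ∫ ω, (1 / π j (Z ω) - 1) ∂P[|ECE], -(θjk * θkj);
         -(θjk * θkj), θkj ^ 2 * ∫ ω, (1 / π k (Z ω) - 1) ∂P[|ECE]])
    (hM₂ : M₂ =
      !![2 * (θjk * cov P[|ECE] (Y j) (fun ω => 1 / π j (Z ω))), 0;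
         0, 2 * (θkj * cov P[|ECE] (Y k) (fun ω => 1 / π k (Z ω)))]) :
    Sipw - Ssipw = M₁ + M₂
    ∧ ((∀ᵐ ω ∂P[|ECE], π j (Z ω) + π k (Z ω) ≤ 1) → M₁.PosSemidef)
    ∧ ((∀ᵐ ω ∂P[|ECE], π j (Z ω) + π k (Z ω) ≤ 1) →
        0 ≤ θjk * cov P[|ECE] (Y j) (fun ω => 1 / π j (Z ω)) →
        0 ≤ θkj * cov P[|ECE] (Y k) (fun ω => 1 / π k (Z ω)) →
        (Sipw - Ssipw).PosSemidef) := by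
  have hECEm : MeasurableSet ECE := by
    rw [hECE]
    exact (measurableSet_lt measurable_const ((hπmeas j).comp hZ)).inter
      (measurableSet_lt measurable_const ((hπmeas k).comp hZ))
  haveI : IsProbabilityMeasure P[|ECE] := cond_isProbabilityMeasure hECEpos
  have hpos : ∀ᵐ ω ∂P[|ECE], 0 < π j (Z ω) ∧ 0 < π k (Z ω) := by
    rw [ProbabilityTheory.cond]
    refine Measure.ae_smul_measure ?_ _
    filter_upwards [ae_restrict_mem hECEm] with ω hω
    rwa [hECE] at hω
  have hIntY : ∀ m, Integrable (Y m) P[|ECE] := by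
    intro m
    rw [ProbabilityTheory.cond]
    exact (((hY2 m).integrable one_le_two).restrict).smul_measure
      (ENNReal.inv_ne_top.mpr hECEpos)
  have hdj := arm P[|ECE] (Y j) (fun ω => π j (Z ω)) θjk hθjk (hIntY j) hIntj hIntj1 hIntjY
  have hdk := arm P[|ECE] (Y k) (fun ω => π k (Z ω)) θkj hθkj (hIntY k) hIntk hIntk1 hIntkY
  have part1 : Sipw - Ssipw = M₁ + M₂ := by
    rw [hSipw, hSsipw, hM₁, hM₂]
    simp only [one_div] at hdj hdk
    ext i i'
    fin_cases i <;> fin_cases i' <;>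
      simp [Matrix.sub_apply, Matrix.add_apply, one_div] <;> linarith [hdj, hdk]
  have hM₁psd : (∀ᵐ ω ∂P[|ECE], π j (Z ω) + π k (Z ω) ≤ 1) → M₁.PosSemidef := by
    intro hle
    have key : ∀ u v : ℝ, 0 ≤ u ^ 2 * (∫ ω, (1 / π j (Z ω) - 1) ∂P[|ECE])
        + v ^ 2 * (∫ ω, (1 / π k (Z ω) - 1) ∂P[|ECE]) - 2 * u * v := by
      intro u v
      have hIj : Integrable (fun ω => 1 / π j (Z ω) - 1) P[|ECE] :=
        hIntj1.sub (integrable_const 1)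
      have hIk : Integrable (fun ω => 1 / π k (Z ω) - 1) P[|ECE] :=
        hIntk1.sub (integrable_const 1)
      have hA : Integrable (fun ω => u ^ 2 * (1 / π j (Z ω) - 1)
          + v ^ 2 * (1 / π k (Z ω) - 1)) P[|ECE] :=
        (hIj.const_mul _).add (hIk.const_mul _)
      have hnn : 0 ≤ ∫ ω, (u ^ 2 * (1 / π j (Z ω) - 1)
          + v ^ 2 * (1 / π k (Z ω) - 1) - 2 * u * v) ∂P[|ECE] := by
        refine integral_nonneg_of_ae ?_
        filter_upwards [hpos, hle] with ω hω hω'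
        exact quad_nonneg u v _ _ hω.1 hω.2 hω'
      rw [integral_sub hA (integrable_const _), integral_add (hIj.const_mul _)
        (hIk.const_mul _), integral_const_mul, integral_const_mul, integral_const,
        probReal_univ] at hnn
      simpa using hnn
    rw [Matrix.posSemidef_iff_dotProduct_mulVec]
    constructor
    · rw [hM₁]
      ext i i'
      fin_cases i <;> fin_cases i' <;>
        simp [Matrix.conjTranspose_apply]
    · intro x
      rw [hM₁]
      have hk2 := key (x 0 * θjk) (x 1 * θkj)
      simp only [one_div] at hk2
      simp [Matrix.mulVec, dotProduct, Fin.sum_univ_two, one_div]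
      nlinarith [hk2]
  refine ⟨part1, hM₁psd, fun hle h2j h2k => ?_⟩
  rw [part1]
  refine posSemidef_add (hM₁psd hle) ?_
  rw [Matrix.posSemidef_iff_dotProduct_mulVec]
  constructor
  · rw [hM₂]
    ext i i'
    fin_cases i <;> fin_cases i' <;> simp [Matrix.conjTranspose_apply]
  · intro x
    rw [hM₂]
    simp only [one_div] at h2j h2k
    simp [Matrix.mulVec, dotProduct, Fin.sum_univ_two, one_div]
    nlinarith [h2j, h2k, sq_nonneg (x 0), sq_nonneg (x 1)]
end
end

section
/- Let U and V be random variables on a probability space with 0 < U, 0 < V and U + V ≤ 1 almost surely, and with 1/U and 1/V integrable. Then E[1/U − 1] · E[1/V − 1] ≥ 1. (Proof uses E[1/U − 1] ≥ E[V/U], E[1/V − 1] ≥ E[U/V], and the Cauchy–Schwarz inequality E[V/U]·E[U/V] ≥ 1.) -/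
open MeasureTheory ProbabilityTheory

/-- if 0 < U, 0 < V and U + V ≤ 1 almost surely, with 1/U and 1/V
integrable, then E[1/U − 1] · E[1/V − 1] ≥ 1. -/
theorem stmt_12
    {Ω : Type*} [MeasurableSpace Ω] (P : Measure Ω) [IsProbabilityMeasure P]
    (U V : Ω → ℝ)
    (hU : ∀ᵐ ω ∂P, 0 < U ω) (hV : ∀ᵐ ω ∂P, 0 < V ω)
    (hUV : ∀ᵐ ω ∂P, U ω + V ω ≤ 1)
    (hUint : Integrable (fun ω => 1 / U ω) P)
    (hVint : Integrable (fun ω => 1 / V ω) P) :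
    (∫ ω, (1 / U ω - 1) ∂P) * (∫ ω, (1 / V ω - 1) ∂P) ≥ 1 := by
  -- a.e. measurability of U and V
  have hUm : AEMeasurable U P := by
    have h := (measurable_inv.comp_aemeasurable hUint.aemeasurable)
    have he : (Inv.inv ∘ fun ω => 1 / U ω) = U := by funext ω; simp
    rwa [he] at h
  have hVm : AEMeasurable V P := by
    have h := (measurable_inv.comp_aemeasurable hVint.aemeasurable)
    have he : (Inv.inv ∘ fun ω => 1 / V ω) = V := by funext ω; simp
    rwa [he] at h
  have hFm : AEMeasurable (fun ω => V ω / U ω) P := hVm.div hUm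
  have hGm : AEMeasurable (fun ω => U ω / V ω) P := hUm.div hVm
  have hUint' : Integrable (fun ω => 1 / U ω - 1) P := hUint.sub (integrable_const 1)
  have hVint' : Integrable (fun ω => 1 / V ω - 1) P := hVint.sub (integrable_const 1)
  have hboundF : ∀ᵐ ω ∂P, ‖V ω / U ω‖ ≤ 1 / U ω - 1 := by
    filter_upwards [hU, hV, hUV] with ω hu hv huv
    rw [Real.norm_eq_abs, abs_of_nonneg (by positivity),
      show (1:ℝ) / U ω - 1 = (1 - U ω) / U ω by field_simp]
    gcongr
    linarith
  have hboundG : ∀ᵐ ω ∂P, ‖U ω / V ω‖ ≤ 1 / V ω - 1 := by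
    filter_upwards [hU, hV, hUV] with ω hu hv huv
    rw [Real.norm_eq_abs, abs_of_nonneg (by positivity),
      show (1:ℝ) / V ω - 1 = (1 - V ω) / V ω by field_simp]
    gcongr
    linarith
  have hFint : Integrable (fun ω => V ω / U ω) P :=
    hUint'.mono' hFm.aestronglyMeasurable hboundF
  have hGint : Integrable (fun ω => U ω / V ω) P :=
    hVint'.mono' hGm.aestronglyMeasurable hboundG
  have hF0 : 0 ≤ᵐ[P] fun ω => V ω / U ω := by
    filter_upwards [hU, hV] with ω hu hv; positivity
  have hG0 : 0 ≤ᵐ[P] fun ω => U ω / V ω := by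
    filter_upwards [hU, hV] with ω hu hv; positivity
  set a := ∫ ω, V ω / U ω ∂P with ha
  set b := ∫ ω, U ω / V ω ∂P with hb
  have ha0 : 0 ≤ a := integral_nonneg_of_ae hF0
  have hb0 : 0 ≤ b := integral_nonneg_of_ae hG0
  -- lintegral versions
  have hFl : ∫⁻ ω, ENNReal.ofReal (V ω / U ω) ∂P = ENNReal.ofReal a :=
    (ofReal_integral_eq_lintegral_ofReal hFint hF0).symm
  have hGl : ∫⁻ ω, ENNReal.ofReal (U ω / V ω) ∂P = ENNReal.ofReal b :=
    (ofReal_integral_eq_lintegral_ofReal hGint hG0).symm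
  -- Cauchy-Schwarz via Hölder
  have hpq : (2:ℝ).HolderConjugate 2 := by constructor <;> norm_num
  have hCS := ENNReal.lintegral_mul_le_Lp_mul_Lq P hpq
    (f := fun ω => ENNReal.ofReal (V ω / U ω) ^ (1/2 : ℝ))
    (g := fun ω => ENNReal.ofReal (U ω / V ω) ^ (1/2 : ℝ))
    ((hFm.ennreal_ofReal).pow aemeasurable_const)
    ((hGm.ennreal_ofReal).pow aemeasurable_const)
  have hone : ∫⁻ ω, (fun ω => ENNReal.ofReal (V ω / U ω) ^ (1/2 : ℝ) *
      ENNReal.ofReal (U ω / V ω) ^ (1/2 : ℝ)) ω ∂P = 1 := by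
    have hae : ∀ᵐ ω ∂P, ENNReal.ofReal (V ω / U ω) ^ (1/2 : ℝ) *
        ENNReal.ofReal (U ω / V ω) ^ (1/2 : ℝ) = 1 := by
      filter_upwards [hU, hV] with ω hu hv
      rw [← ENNReal.mul_rpow_of_nonneg _ _ (by norm_num),
        ← ENNReal.ofReal_mul (by positivity)]
      have h1 : V ω / U ω * (U ω / V ω) = 1 := by field_simp
      simp [h1]
    calc ∫⁻ ω, (ENNReal.ofReal (V ω / U ω) ^ (1/2 : ℝ) *
          ENNReal.ofReal (U ω / V ω) ^ (1/2 : ℝ)) ∂P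
        = ∫⁻ _, 1 ∂P := lintegral_congr_ae hae
      _ = 1 := by simp
  have hsq : ∀ x : ENNReal, (x ^ (1/2 : ℝ)) ^ (2 : ℝ) = x := by
    intro x
    rw [← ENNReal.rpow_mul]
    norm_num
  simp only [Pi.mul_apply, hsq] at hCS
  rw [hone, hFl, hGl] at hCS
  have h1 : (1 : ENNReal) ≤ ENNReal.ofReal a * ENNReal.ofReal b := by
    calc (1 : ENNReal) = (1 : ENNReal) ^ (2 : ℝ) := by simp
      _ ≤ (ENNReal.ofReal a ^ (1/2 : ℝ) * ENNReal.ofReal b ^ (1/2 : ℝ)) ^ (2 : ℝ) :=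
          ENNReal.rpow_le_rpow hCS (by norm_num)
      _ = ENNReal.ofReal a * ENNReal.ofReal b := by
          rw [ENNReal.mul_rpow_of_nonneg _ _ (by norm_num), hsq, hsq]
  rw [← ENNReal.ofReal_mul ha0] at h1
  have hab : 1 ≤ a * b := by
    rwa [ENNReal.one_le_ofReal] at h1
  have hEa : a ≤ ∫ ω, (1 / U ω - 1) ∂P := by
    refine integral_mono_ae hFint hUint' ?_
    filter_upwards [hboundF] with ω h
    exact (le_abs_self _).trans h
  have hEb : b ≤ ∫ ω, (1 / V ω - 1) ∂P := by
    refine integral_mono_ae hGint hVint' ?_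
    filter_upwards [hboundG] with ω h
    exact (le_abs_self _).trans h
  exact le_trans hab (mul_le_mul hEa hEb hb0 (ha0.trans hEa))
end

section
/- (Corollary 3.) Under Assumption 1 and the stratification setup, assume conditions (i)–(iii): (i) E_jk(ε_jk | S) = δ_jk and E_jk(ε_kj | S) = δ_kj almost surely; (ii) Cov_jk(ε_jk, μ_jk(X) | S) = 0 and Cov_jk(ε_kj, μ_kj(X) | S) = 0 almost surely; (iii) Cov_jk(ε_jk, μ_kj(X) | S) = 0 and Cov_jk(ε_kj, μ_jk(X) | S) = 0 almost surely. Let Σ_sipw = diag( E_jk[(Y^(j)−θ_jk)²/π_j(S)], E_jk[(Y^(k)−θ_kj)²/π_k(S)] ) and Σ_saipw = diag( E_jk[(ε_jk−δ_jk)²/π_j(S)], E_jk[(ε_kj−δ_kj)²/π_k(S)] ) + Λ_jk, where Λ_jk has diagonal (λ_jk, λ_kj) and off-diagonal entries c_jk. Then Σ_sipw − Σ_saipw equals the 2×2 matrix with diagonal entries E_jk[ {μ_jk(X) − E_jk μ_jk(X)}² (1/π_j(S) − 1) ] and E_jk[ {μ_kj(X) − E_jk μ_kj(X)}² (1/π_k(S)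 − 1) ] and both off-diagonal entries −Cov_jk(μ_jk(X), μ_kj(X)); moreover, if π_j(S) + π_k(S) ≤ 1 almost surely on the ECE event, this matrix is positive semidefinite. -/
open MeasureTheory ProbabilityTheory Filter Set

noncomputable section

/-- The conditional mean `E_μ(f | S)` of `f` given a finitely-valued variable `S`,
as a function on the sample space. -/
def condMeanOn {Ω 𝓢 : Type*} [MeasurableSpace Ω] (μ : Measure Ω) (S : Ω → 𝓢) (f : Ω → ℝ) :
    Ω → ℝ :=
  fun ω => ∫ x, f x ∂μ[|{ω' | S ω' = S ω}]

/-- The conditional variance `Var_μ(f | S)` of `f` given `S`, as a function on the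
sample space. -/
def condVarOn {Ω 𝓢 : Type*} [MeasurableSpace Ω] (μ : Measure Ω) (S : Ω → 𝓢) (f : Ω → ℝ) :
    Ω → ℝ :=
  fun ω => ProbabilityTheory.variance f μ[|{ω' | S ω' = S ω}]

/-- The conditional covariance `Cov_μ(f, g | S)` of `f` and `g` given `S`, as a function on
the sample space. -/
def condCovOn {Ω 𝓢 : Type*} [MeasurableSpace Ω] (μ : Measure Ω) (S : Ω → 𝓢) (f g : Ω → ℝ) :
    Ω → ℝ :=
  fun ω => cov μ[|{ω' | S ω' = S ω}] f g

namespace Stmt14Aux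

variable {Ω : Type*} [MeasurableSpace Ω]

lemma memLp_mul_integrable {μ : Measure Ω} {f g : Ω → ℝ}
    (hf : MemLp f 2 μ) (hg : MemLp g 2 μ) :
    Integrable (fun ω => f ω * g ω) μ := by
  have h : MemLp (g • f) 1 μ := hf.smul hg
  have h2 : Integrable (fun ω => g ω * f ω) μ := by
    exact memLp_one_iff_integrable.mp h
  simpa [mul_comm] using h2

lemma memLp_cond {μ : Measure Ω} [IsFiniteMeasure μ] {s : Set Ω} (hs : μ s ≠ 0)
    {f : Ω → ℝ} (hf : MemLp f 2 μ) : MemLp f 2 μ[|s] := by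
  rw [ProbabilityTheory.cond]
  exact (hf.restrict s).smul_measure (by simp [hs])

lemma integral_partition {𝓢 : Type*} [Fintype 𝓢] [MeasurableSpace 𝓢]
    [MeasurableSingletonClass 𝓢]
    {μ : Measure Ω} {S : Ω → 𝓢} (hS : Measurable S) {f : Ω → ℝ} (hf : Integrable f μ) :
    ∫ ω, f ω ∂μ = ∑ s, ∫ ω in {ω' | S ω' = s}, f ω ∂μ := by
  have hmeas : ∀ s : 𝓢, MeasurableSet {ω' | S ω' = s} :=
    fun s => hS (measurableSet_singleton s)
  have hdisj : Pairwise (Function.onFun Disjoint (fun s : 𝓢 => {ω' | S ω' = s})) := by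
    intro a b hab
    simp only [Function.onFun, Set.disjoint_left]
    intro ω ha hb
    exact hab (by rw [← ha, ← hb])
  have hunion : (⋃ s : 𝓢, {ω' | S ω' = s}) = Set.univ := by
    ext ω; simp
  calc ∫ ω, f ω ∂μ = ∫ ω in ⋃ s : 𝓢, {ω' | S ω' = s}, f ω ∂μ := by
        rw [hunion, Measure.restrict_univ]
    _ = ∑ s, ∫ ω in {ω' | S ω' = s}, f ω ∂μ :=
        integral_iUnion_fintype hmeas hdisj (fun s => hf.integrableOn)

lemma setIntegral_eq_cond {μ : Measure Ω} [IsFiniteMeasure μ] {s : Set Ω} (hs : μ s ≠ 0)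
    (f : Ω → ℝ) :
    ∫ ω in s, f ω ∂μ = (μ s).toReal * ∫ ω, f ω ∂μ[|s] := by
  rw [ProbabilityTheory.cond, integral_smul_measure, ENNReal.toReal_inv, smul_eq_mul,
    ← mul_assoc, mul_inv_cancel₀ (ENNReal.toReal_ne_zero.mpr ⟨hs, measure_ne_top μ s⟩), one_mul]

lemma level_of_ae {𝓢 : Type*} {μ : Measure Ω} {S : Ω → 𝓢} {Φ : 𝓢 → Prop}
    (h : ∀ᵐ ω ∂μ, Φ (S ω)) {s : 𝓢} (hs : μ {ω' | S ω' = s} ≠ 0) : Φ s := by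
  by_contra hc
  apply hs
  refine measure_mono_null ?_ (ae_iff.mp h)
  intro ω hω
  exact fun hΦ => hc (hω ▸ hΦ)

lemma integral_centered_mul_eq_zero {μ : Measure Ω} [IsProbabilityMeasure μ]
    {f g : Ω → ℝ} (hf : MemLp f 2 μ) (hg : MemLp g 2 μ) {δ : ℝ}
    (hmean : ∫ ω, f ω ∂μ = δ) (hcov : cov μ f g = 0) (c : ℝ) :
    ∫ ω, (f ω - δ) * (g ω - c) ∂μ = 0 := by
  set b := ∫ ω, g ω ∂μ with hb
  have hint1 : Integrable (fun ω => (f ω - δ) * (g ω - b)) μ :=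
    memLp_mul_integrable (hf.sub (memLp_const δ)) (hg.sub (memLp_const b))
  have hintf : Integrable (fun ω => f ω - δ) μ :=
    (hf.integrable one_le_two).sub (integrable_const δ)
  have hcov' : ∫ ω, (f ω - δ) * (g ω - b) ∂μ = 0 := by
    rw [← hcov, cov, hmean, ← hb]
  have hkey : ∀ ω, (f ω - δ) * (g ω - c)
      = (f ω - δ) * (g ω - b) + (f ω - δ) * (b - c) := by
    intro ω; ring
  rw [show (fun ω => (f ω - δ) * (g ω - c))
      = fun ω => (f ω - δ) * (g ω - b) + (f ω - δ) * (b - c) from funext hkey]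
  rw [integral_add hint1 (hintf.mul_const _), hcov', integral_mul_const,
    integral_sub (hf.integrable one_le_two) (integrable_const δ), hmean]
  simp

lemma weighted_cross_zero {𝓢 : Type*} [Fintype 𝓢] [MeasurableSpace 𝓢]
    [MeasurableSingletonClass 𝓢]
    {μ : Measure Ω} [IsProbabilityMeasure μ] {S : Ω → 𝓢} (hS : Measurable S)
    {F w : Ω → ℝ} (hw : ∀ ω ω', S ω = S ω' → w ω = w ω')
    (hint : Integrable (fun ω => F ω * w ω) μ)
    (hlevel : ∀ s : 𝓢, μ {ω' | S ω' = s} ≠ 0 → ∫ ω, F ω ∂μ[|{ω' | S ω' = s}] = 0) :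
    ∫ ω, F ω * w ω ∂μ = 0 := by
  rw [integral_partition hS hint]
  refine Finset.sum_eq_zero fun s _ => ?_
  by_cases hs : μ {ω' | S ω' = s} = 0
  · rw [show μ.restrict {ω' | S ω' = s} = 0 from Measure.restrict_eq_zero.mpr hs,
      integral_zero_measure]
  · obtain ⟨ω₀, hω₀⟩ : ∃ ω₀, S ω₀ = s := by
      by_contra h
      push_neg at h
      apply hs
      rw [show {ω' | S ω' = s} = ∅ from Set.eq_empty_iff_forall_notMem.mpr h]
      simp
    have heq : Set.EqOn (fun ω => F ω * w ω) (fun ω => F ω * w ω₀) {ω' | S ω' = s} := by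
      intro ω hω
      simp only
      rw [hw ω ω₀ (by rw [hω, hω₀])]
    have hms : MeasurableSet {ω' | S ω' = s} := hS (measurableSet_singleton s)
    rw [setIntegral_congr_fun hms heq, integral_mul_const,
      setIntegral_eq_cond hs, hlevel s hs, mul_zero, zero_mul]

lemma variance_eq' {μ : Measure Ω} [IsFiniteMeasure μ] {X : Ω → ℝ} (hX : MemLp X 2 μ) :
    variance X μ = ∫ ω, (X ω - ∫ x, X x ∂μ) ^ 2 ∂μ := by
  rw [variance_eq_integral hX.aestronglyMeasurable.aemeasurable]

lemma quad_split (A B p : ℝ) :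
    (A + B) ^ 2 / p = A ^ 2 / p + 2 * (A * B * p⁻¹) + B ^ 2 * (1 / p - 1) + B ^ 2 := by
  by_cases hp : p = 0
  · simp [hp]
  · field_simp
    ring

lemma quad_nonneg (u v p q : ℝ) (hp : 0 < p) (hq : 0 < q) (hpq : p + q ≤ 1) :
    0 ≤ u ^ 2 * (1 / p - 1) + v ^ 2 * (1 / q - 1) - 2 * (u * v) := by
  have e1 : q / p ≤ 1 / p - 1 := by
    have h1 : (1 : ℝ) / p - 1 = (1 - p) / p := by field_simp
    rw [h1]
    exact (div_le_div_iff_of_pos_right hp).mpr (by linarith)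
  have e2 : p / q ≤ 1 / q - 1 := by
    have h1 : (1 : ℝ) / q - 1 = (1 - q) / q := by field_simp
    rw [h1]
    exact (div_le_div_iff_of_pos_right hq).mpr (by linarith)
  have e3 : 0 ≤ u ^ 2 * (q / p) + v ^ 2 * (p / q) - 2 * (u * v) := by
    set r := q / p with hr
    have hrpos : 0 < r := div_pos hq hp
    have hrr : p / q = r⁻¹ := by rw [hr, inv_div]
    rw [hrr]
    have hid : u ^ 2 * r + v ^ 2 * r⁻¹ - 2 * (u * v)
        = (u ^ 2 * r ^ 2 - 2 * (u * v) * r + v ^ 2) / r := by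
      field_simp
      ring
    rw [hid]
    exact div_nonneg (by nlinarith [sq_nonneg (u * r - v)]) hrpos.le
  have h1 : u ^ 2 * (q / p) ≤ u ^ 2 * (1 / p - 1) :=
    mul_le_mul_of_nonneg_left e1 (sq_nonneg u)
  have h2 : v ^ 2 * (p / q) ≤ v ^ 2 * (1 / q - 1) :=
    mul_le_mul_of_nonneg_left e2 (sq_nonneg v)
  linarith

end Stmt14Aux


/-- Corollary 3: under the calibration conditions (i)–(iii),
Σ_sipw − Σ_saipw has the displayed form and is positive semidefinite. -/
theorem stmt_14
    {Ω 𝓩 𝓦 : Type*} [MeasurableSpace Ω] [StandardBorelSpace Ω]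
    [MeasurableSpace 𝓩] [MeasurableSpace 𝓦]
    (P : Measure Ω) [IsProbabilityMeasure P]
    {J : ℕ} (Z : Ω → 𝓩) (W : Ω → 𝓦) (A : Ω → Fin J) (Y : Fin J → Ω → ℝ)
    (hZ : Measurable Z) (hW : Measurable W) (hA : Measurable A)
    (hY : ∀ m, Measurable (Y m)) (hY2 : ∀ m, MemLp (Y m) 2 P)
    (π : Fin J → 𝓩 → ℝ) (hπmeas : ∀ m, Measurable (π m))
    (hπ01 : ∀ m z, π m z ∈ Set.Icc (0:ℝ) 1)
    (hπsum : ∀ z, ∑ m, π m z = 1)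
    -- Assumption 1: A ⟂ (W, Y^(1),…,Y^(J)) given Z
    (hCI : CondIndepFun (MeasurableSpace.comap Z inferInstance) hZ.comap_le A
        (fun ω => (W ω, fun m => Y m ω)) P)
    -- Assumption 1: P(A = m | Z) = π_m(Z) a.s.
    (hprop : ∀ m : Fin J,
      (P[ Set.indicator {ω' | A ω' = m} (fun _ => (1:ℝ)) | MeasurableSpace.comap Z inferInstance])
        =ᵐ[P] fun ω => π m (Z ω))
    (j k : Fin J) (hjk : j ≠ k)
    -- the ECE event, with positive probability
    (ECE : Set Ω) (hECE : ECE = {ω | 0 < π j (Z ω) ∧ 0 < π k (Z ω)})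
    (hECEpos : P ECE ≠ 0)
    -- stratification: S is a function of Z with finitely many values, and π_j(Z), π_k(Z)
    -- are constant on every level of S
    {𝓢 : Type*} [Fintype 𝓢] [MeasurableSpace 𝓢] [MeasurableSingletonClass 𝓢]
    (S : Ω → 𝓢) (hSZ : ∃ g : 𝓩 → 𝓢, Measurable g ∧ ∀ ω, S ω = g (Z ω))
    (hconstj : ∀ ω ω', S ω = S ω' → π j (Z ω) = π j (Z ω'))
    (hconstk : ∀ ω ω', S ω = S ω' → π k (Z ω) = π k (Z ω'))
    -- working model: a covariate sub-vector X of W and a function μjk of X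
    {𝓧 : Type*} [MeasurableSpace 𝓧]
    (X : Ω → 𝓧) (hXW : ∃ g : 𝓦 → 𝓧, Measurable g ∧ ∀ ω, X ω = g (W ω))
    (μjk : 𝓧 → ℝ) (hμjkm : Measurable μjk) (hμjk2 : MemLp (fun ω => μjk (X ω)) 2 P)
    (μkj : 𝓧 → ℝ) (hμkjm : Measurable μkj) (hμkj2 : MemLp (fun ω => μkj (X ω)) 2 P)
    -- θ's, residuals, δ's, λ's and c_jk
    (θjk θkj : ℝ) (hθjk : θjk = ∫ ω, Y j ω ∂P[|ECE]) (hθkj : θkj = ∫ ω, Y k ω ∂P[|ECE])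
    (εjk εkj : Ω → ℝ)
    (hεjk : ∀ ω, εjk ω = Y j ω - μjk (X ω)) (hεkj : ∀ ω, εkj ω = Y k ω - μkj (X ω))
    (δjk δkj : ℝ)
    (hδjk : δjk = ∫ ω, εjk ω ∂P[|ECE]) (hδkj : δkj = ∫ ω, εkj ω ∂P[|ECE])
    (lamjk lamkj : ℝ)
    (hlamjk : lamjk = variance (Y j) P[|ECE] - variance εjk P[|ECE])
    (hlamkj : lamkj = variance (Y k) P[|ECE] - variance εkj P[|ECE])
    (cjk : ℝ) (hcjk : cjk = cov P[|ECE] (Y j) (Y k) - cov P[|ECE] εjk εkj)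
    -- conditions (i)–(iii)
    (hU1 : ∀ᵐ ω ∂P[|ECE], condMeanOn P[|ECE] S εjk ω = δjk)
    (hU2 : ∀ᵐ ω ∂P[|ECE], condMeanOn P[|ECE] S εkj ω = δkj)
    (hii1 : ∀ᵐ ω ∂P[|ECE], condCovOn P[|ECE] S εjk (fun x => μjk (X x)) ω = 0)
    (hii2 : ∀ᵐ ω ∂P[|ECE], condCovOn P[|ECE] S εkj (fun x => μkj (X x)) ω = 0)
    (hiii1 : ∀ᵐ ω ∂P[|ECE], condCovOn P[|ECE] S εjk (fun x => μkj (X x)) ω = 0)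
    (hiii2 : ∀ᵐ ω ∂P[|ECE], condCovOn P[|ECE] S εkj (fun x => μjk (X x)) ω = 0)
    -- finiteness of the displayed conditional moments
    (hIntj : Integrable (fun ω => (Y j ω - θjk) ^ 2 / π j (Z ω)) P[|ECE])
    (hIntk : Integrable (fun ω => (Y k ω - θkj) ^ 2 / π k (Z ω)) P[|ECE])
    (hIntjε : Integrable (fun ω => (εjk ω - δjk) ^ 2 / π j (Z ω)) P[|ECE])
    (hIntkε : Integrable (fun ω => (εkj ω - δkj) ^ 2 / π k (Z ω)) P[|ECE])
    (hIntjμ : Integrable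
      (fun ω => (μjk (X ω) - ∫ x, μjk (X x) ∂P[|ECE]) ^ 2 * (1 / π j (Z ω) - 1)) P[|ECE])
    (hIntkμ : Integrable
      (fun ω => (μkj (X ω) - ∫ x, μkj (X x) ∂P[|ECE]) ^ 2 * (1 / π k (Z ω) - 1)) P[|ECE])
    -- the matrices
    (Ssipw Ssaipw M : Matrix (Fin 2) (Fin 2) ℝ)
    (hSsipw : Ssipw =
      !![∫ ω, (Y j ω - θjk) ^ 2 / π j (Z ω) ∂P[|ECE], 0;
         0, ∫ ω, (Y k ω - θkj) ^ 2 / π k (Z ω) ∂P[|ECE]])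
    (hSsaipw : Ssaipw =
      !![∫ ω, (εjk ω - δjk) ^ 2 / π j (Z ω) ∂P[|ECE], 0;
         0, ∫ ω, (εkj ω - δkj) ^ 2 / π k (Z ω) ∂P[|ECE]]
      + !![lamjk, cjk; cjk, lamkj])
    (hM : M =
      !![∫ ω, (μjk (X ω) - ∫ x, μjk (X x) ∂P[|ECE]) ^ 2 * (1 / π j (Z ω) - 1) ∂P[|ECE],
           -cov P[|ECE] (fun x => μjk (X x)) (fun x => μkj (X x));
         -cov P[|ECE] (fun x => μjk (X x)) (fun x => μkj (X x)),
           ∫ ω, (μkj (X ω) - ∫ x, μkj (X x) ∂P[|ECE]) ^ 2 * (1 / π k (Z ω) - 1) ∂P[|ECE]]) :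
    Ssipw - Ssaipw = M
    ∧ ((∀ᵐ ω ∂P[|ECE], π j (Z ω) + π k (Z ω) ≤ 1) → M.PosSemidef) := by
  obtain ⟨gS, hgS, hSg⟩ := hSZ
  have hSmeas : Measurable S := by
    rw [show S = fun ω => gS (Z ω) from funext hSg]
    exact hgS.comp hZ
  have hECEmeas : MeasurableSet ECE := by
    rw [hECE]
    exact (measurableSet_lt measurable_const ((hπmeas j).comp hZ)).inter
      (measurableSet_lt measurable_const ((hπmeas k).comp hZ))
  set ν := P[|ECE] with hνdef
  haveI hνprob : IsProbabilityMeasure ν := cond_isProbabilityMeasure hECEpos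
  -- a.e. positivity of the propensities on the ECE event
  have haeECE : ∀ᵐ ω ∂ν, 0 < π j (Z ω) ∧ 0 < π k (Z ω) := by
    have h0 : ν ECEᶜ = 0 := by
      rw [hνdef, ProbabilityTheory.cond_apply hECEmeas]
      simp
    rw [ae_iff]
    refine measure_mono_null (fun ω hω => ?_) h0
    rw [hECE]
    exact hω
  -- square integrability under ν
  have hYj2ν : MemLp (Y j) 2 ν := Stmt14Aux.memLp_cond hECEpos (hY2 j)
  have hYk2ν : MemLp (Y k) 2 ν := Stmt14Aux.memLp_cond hECEpos (hY2 k)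
  have hμjkν : MemLp (fun ω => μjk (X ω)) 2 ν := Stmt14Aux.memLp_cond hECEpos hμjk2
  have hμkjν : MemLp (fun ω => μkj (X ω)) 2 ν := Stmt14Aux.memLp_cond hECEpos hμkj2
  have hεjkP : MemLp εjk 2 P := by
    rw [show εjk = fun ω => Y j ω - μjk (X ω) from funext hεjk]
    exact (hY2 j).sub hμjk2
  have hεkjP : MemLp εkj 2 P := by
    rw [show εkj = fun ω => Y k ω - μkj (X ω) from funext hεkj]
    exact (hY2 k).sub hμkj2
  have hεjkν : MemLp εjk 2 ν := Stmt14Aux.memLp_cond hECEpos hεjkP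
  have hεkjν : MemLp εkj 2 ν := Stmt14Aux.memLp_cond hECEpos hεkjP
  set mj := ∫ x, μjk (X x) ∂ν with hmj
  set mk := ∫ x, μkj (X x) ∂ν with hmk
  -- centered functions are in L²
  have memAj : MemLp (fun ω => εjk ω - δjk) 2 ν := hεjkν.sub (memLp_const δjk)
  have memCk : MemLp (fun ω => εkj ω - δkj) 2 ν := hεkjν.sub (memLp_const δkj)
  have memBj : MemLp (fun ω => μjk (X ω) - mj) 2 ν := hμjkν.sub (memLp_const mj)
  have memDk : MemLp (fun ω => μkj (X ω) - mk) 2 ν := hμkjν.sub (memLp_const mk)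
  have iAj2 : Integrable (fun ω => (εjk ω - δjk) ^ 2) ν := by
    simpa [pow_two] using Stmt14Aux.memLp_mul_integrable memAj memAj
  have iCk2 : Integrable (fun ω => (εkj ω - δkj) ^ 2) ν := by
    simpa [pow_two] using Stmt14Aux.memLp_mul_integrable memCk memCk
  have iBj2 : Integrable (fun ω => (μjk (X ω) - mj) ^ 2) ν := by
    simpa [pow_two] using Stmt14Aux.memLp_mul_integrable memBj memBj
  have iDk2 : Integrable (fun ω => (μkj (X ω) - mk) ^ 2) ν := by
    simpa [pow_two] using Stmt14Aux.memLp_mul_integrable memDk memDk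
  have iABj : Integrable (fun ω => (εjk ω - δjk) * (μjk (X ω) - mj)) ν :=
    Stmt14Aux.memLp_mul_integrable memAj memBj
  have iCDk : Integrable (fun ω => (εkj ω - δkj) * (μkj (X ω) - mk)) ν :=
    Stmt14Aux.memLp_mul_integrable memCk memDk
  have iAC : Integrable (fun ω => (εjk ω - δjk) * (εkj ω - δkj)) ν :=
    Stmt14Aux.memLp_mul_integrable memAj memCk
  have iAD : Integrable (fun ω => (εjk ω - δjk) * (μkj (X ω) - mk)) ν :=
    Stmt14Aux.memLp_mul_integrable memAj memDk
  have iCB : Integrable (fun ω => (εkj ω - δkj) * (μjk (X ω) - mj)) ν :=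
    Stmt14Aux.memLp_mul_integrable memCk memBj
  have iBD : Integrable (fun ω => (μjk (X ω) - mj) * (μkj (X ω) - mk)) ν :=
    Stmt14Aux.memLp_mul_integrable memBj memDk
  -- θ decompositions
  have hθj : θjk = δjk + mj := by
    have h1 : θjk = ∫ ω, (εjk ω + μjk (X ω)) ∂ν := by
      rw [hθjk]
      refine integral_congr_ae (ae_of_all _ fun ω => ?_)
      show Y j ω = εjk ω + μjk (X ω)
      rw [hεjk ω]; ring
    rw [h1, integral_add (hεjkν.integrable one_le_two) (hμjkν.integrable one_le_two),
      ← hδjk, ← hmj]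
  have hθk : θkj = δkj + mk := by
    have h1 : θkj = ∫ ω, (εkj ω + μkj (X ω)) ∂ν := by
      rw [hθkj]
      refine integral_congr_ae (ae_of_all _ fun ω => ?_)
      show Y k ω = εkj ω + μkj (X ω)
      rw [hεkj ω]; ring
    rw [h1, integral_add (hεkjν.integrable one_le_two) (hμkjν.integrable one_le_two),
      ← hδkj, ← hmk]
  -- per-level means and covariances
  have hmeanj : ∀ s : 𝓢, ν {ω' | S ω' = s} ≠ 0 →
      ∫ x, εjk x ∂ν[|{ω' | S ω' = s}] = δjk := fun s hs =>
    Stmt14Aux.level_of_ae (Φ := fun t => ∫ x, εjk x ∂ν[|{ω' | S ω' = t}] = δjk) hU1 hs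
  have hmeank : ∀ s : 𝓢, ν {ω' | S ω' = s} ≠ 0 →
      ∫ x, εkj x ∂ν[|{ω' | S ω' = s}] = δkj := fun s hs =>
    Stmt14Aux.level_of_ae (Φ := fun t => ∫ x, εkj x ∂ν[|{ω' | S ω' = t}] = δkj) hU2 hs
  have hcovjj : ∀ s : 𝓢, ν {ω' | S ω' = s} ≠ 0 →
      cov ν[|{ω' | S ω' = s}] εjk (fun x => μjk (X x)) = 0 := fun s hs =>
    Stmt14Aux.level_of_ae
      (Φ := fun t => cov ν[|{ω' | S ω' = t}] εjk (fun x => μjk (X x)) = 0) hii1 hs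
  have hcovkk : ∀ s : 𝓢, ν {ω' | S ω' = s} ≠ 0 →
      cov ν[|{ω' | S ω' = s}] εkj (fun x => μkj (X x)) = 0 := fun s hs =>
    Stmt14Aux.level_of_ae
      (Φ := fun t => cov ν[|{ω' | S ω' = t}] εkj (fun x => μkj (X x)) = 0) hii2 hs
  have hcovjD : ∀ s : 𝓢, ν {ω' | S ω' = s} ≠ 0 →
      cov ν[|{ω' | S ω' = s}] εjk (fun x => μkj (X x)) = 0 := fun s hs =>
    Stmt14Aux.level_of_ae
      (Φ := fun t => cov ν[|{ω' | S ω' = t}] εjk (fun x => μkj (X x)) = 0) hiii1 hs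
  have hcovkB : ∀ s : 𝓢, ν {ω' | S ω' = s} ≠ 0 →
      cov ν[|{ω' | S ω' = s}] εkj (fun x => μjk (X x)) = 0 := fun s hs =>
    Stmt14Aux.level_of_ae
      (Φ := fun t => cov ν[|{ω' | S ω' = t}] εkj (fun x => μjk (X x)) = 0) hiii2 hs
  -- per-level vanishing of centered products
  have hlevjj : ∀ (c : ℝ) (s : 𝓢), ν {ω' | S ω' = s} ≠ 0 →
      ∫ ω, (εjk ω - δjk) * (μjk (X ω) - c) ∂ν[|{ω' | S ω' = s}] = 0 := by
    intro c s hs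
    haveI := cond_isProbabilityMeasure (μ := ν) hs
    exact Stmt14Aux.integral_centered_mul_eq_zero (Stmt14Aux.memLp_cond hs hεjkν)
      (Stmt14Aux.memLp_cond hs hμjkν) (hmeanj s hs) (hcovjj s hs) c
  have hlevkk : ∀ (c : ℝ) (s : 𝓢), ν {ω' | S ω' = s} ≠ 0 →
      ∫ ω, (εkj ω - δkj) * (μkj (X ω) - c) ∂ν[|{ω' | S ω' = s}] = 0 := by
    intro c s hs
    haveI := cond_isProbabilityMeasure (μ := ν) hs
    exact Stmt14Aux.integral_centered_mul_eq_zero (Stmt14Aux.memLp_cond hs hεkjν)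
      (Stmt14Aux.memLp_cond hs hμkjν) (hmeank s hs) (hcovkk s hs) c
  have hlevjD : ∀ (c : ℝ) (s : 𝓢), ν {ω' | S ω' = s} ≠ 0 →
      ∫ ω, (εjk ω - δjk) * (μkj (X ω) - c) ∂ν[|{ω' | S ω' = s}] = 0 := by
    intro c s hs
    haveI := cond_isProbabilityMeasure (μ := ν) hs
    exact Stmt14Aux.integral_centered_mul_eq_zero (Stmt14Aux.memLp_cond hs hεjkν)
      (Stmt14Aux.memLp_cond hs hμkjν) (hmeanj s hs) (hcovjD s hs) c
  have hlevkB : ∀ (c : ℝ) (s : 𝓢), ν {ω' | S ω' = s} ≠ 0 →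
      ∫ ω, (εkj ω - δkj) * (μjk (X ω) - c) ∂ν[|{ω' | S ω' = s}] = 0 := by
    intro c s hs
    haveI := cond_isProbabilityMeasure (μ := ν) hs
    exact Stmt14Aux.integral_centered_mul_eq_zero (Stmt14Aux.memLp_cond hs hεkjν)
      (Stmt14Aux.memLp_cond hs hμjkν) (hmeank s hs) (hcovkB s hs) c
  -- pointwise quadratic splits
  have hptj : ∀ ω, (Y j ω - θjk) ^ 2 / π j (Z ω)
      = (εjk ω - δjk) ^ 2 / π j (Z ω)
        + 2 * ((εjk ω - δjk) * (μjk (X ω) - mj) * (π j (Z ω))⁻¹)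
        + (μjk (X ω) - mj) ^ 2 * (1 / π j (Z ω) - 1)
        + (μjk (X ω) - mj) ^ 2 := by
    intro ω
    have h : Y j ω - θjk = (εjk ω - δjk) + (μjk (X ω) - mj) := by
      rw [hεjk ω, hθj]; ring
    rw [h]
    exact Stmt14Aux.quad_split _ _ _
  have hptk : ∀ ω, (Y k ω - θkj) ^ 2 / π k (Z ω)
      = (εkj ω - δkj) ^ 2 / π k (Z ω)
        + 2 * ((εkj ω - δkj) * (μkj (X ω) - mk) * (π k (Z ω))⁻¹)
        + (μkj (X ω) - mk) ^ 2 * (1 / π k (Z ω) - 1)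
        + (μkj (X ω) - mk) ^ 2 := by
    intro ω
    have h : Y k ω - θkj = (εkj ω - δkj) + (μkj (X ω) - mk) := by
      rw [hεkj ω, hθk]; ring
    rw [h]
    exact Stmt14Aux.quad_split _ _ _
  -- integrability of the weighted cross terms
  have icrossj : Integrable
      (fun ω => (εjk ω - δjk) * (μjk (X ω) - mj) * (π j (Z ω))⁻¹) ν := by
    have h : (fun ω => (εjk ω - δjk) * (μjk (X ω) - mj) * (π j (Z ω))⁻¹)
        = fun ω => ((Y j ω - θjk) ^ 2 / π j (Z ω)
            - (εjk ω - δjk) ^ 2 / π j (Z ω)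
            - (μjk (X ω) - mj) ^ 2 * (1 / π j (Z ω) - 1)
            - (μjk (X ω) - mj) ^ 2) / 2 := by
      funext ω; rw [hptj ω]; ring
    rw [h]
    exact (((hIntj.sub hIntjε).sub hIntjμ).sub iBj2).div_const 2
  have icrossk : Integrable
      (fun ω => (εkj ω - δkj) * (μkj (X ω) - mk) * (π k (Z ω))⁻¹) ν := by
    have h : (fun ω => (εkj ω - δkj) * (μkj (X ω) - mk) * (π k (Z ω))⁻¹)
        = fun ω => ((Y k ω - θkj) ^ 2 / π k (Z ω)
            - (εkj ω - δkj) ^ 2 / π k (Z ω)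
            - (μkj (X ω) - mk) ^ 2 * (1 / π k (Z ω) - 1)
            - (μkj (X ω) - mk) ^ 2) / 2 := by
      funext ω; rw [hptk ω]; ring
    rw [h]
    exact (((hIntk.sub hIntkε).sub hIntkμ).sub iDk2).div_const 2
  -- the vanishing integrals
  have Z1 : ∫ ω, (εjk ω - δjk) * (μjk (X ω) - mj) * (π j (Z ω))⁻¹ ∂ν = 0 :=
    Stmt14Aux.weighted_cross_zero (F := fun ω => (εjk ω - δjk) * (μjk (X ω) - mj))
      (w := fun ω => (π j (Z ω))⁻¹) hSmeas
      (fun ω ω' h => congrArg Inv.inv (hconstj ω ω' h)) icrossj (hlevjj mj)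
  have Z2 : ∫ ω, (εkj ω - δkj) * (μkj (X ω) - mk) * (π k (Z ω))⁻¹ ∂ν = 0 :=
    Stmt14Aux.weighted_cross_zero (F := fun ω => (εkj ω - δkj) * (μkj (X ω) - mk))
      (w := fun ω => (π k (Z ω))⁻¹) hSmeas
      (fun ω ω' h => congrArg Inv.inv (hconstk ω ω' h)) icrossk (hlevkk mk)
  have Z3 : ∫ ω, (εjk ω - δjk) * (μjk (X ω) - mj) ∂ν = 0 := by
    have h := Stmt14Aux.weighted_cross_zero
      (F := fun ω => (εjk ω - δjk) * (μjk (X ω) - mj)) (w := fun _ => (1:ℝ)) hSmeas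
      (fun _ _ _ => rfl) (by simpa using iABj) (hlevjj mj)
    simpa using h
  have Z4 : ∫ ω, (εkj ω - δkj) * (μkj (X ω) - mk) ∂ν = 0 := by
    have h := Stmt14Aux.weighted_cross_zero
      (F := fun ω => (εkj ω - δkj) * (μkj (X ω) - mk)) (w := fun _ => (1:ℝ)) hSmeas
      (fun _ _ _ => rfl) (by simpa using iCDk) (hlevkk mk)
    simpa using h
  have Z5 : ∫ ω, (εjk ω - δjk) * (μkj (X ω) - mk) ∂ν = 0 := by
    have h := Stmt14Aux.weighted_cross_zero
      (F := fun ω => (εjk ω - δjk) * (μkj (X ω) - mk)) (w := fun _ => (1:ℝ)) hSmeas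
      (fun _ _ _ => rfl) (by simpa using iAD) (hlevjD mk)
    simpa using h
  have Z6 : ∫ ω, (εkj ω - δkj) * (μjk (X ω) - mj) ∂ν = 0 := by
    have h := Stmt14Aux.weighted_cross_zero
      (F := fun ω => (εkj ω - δkj) * (μjk (X ω) - mj)) (w := fun _ => (1:ℝ)) hSmeas
      (fun _ _ _ => rfl) (by simpa using iCB) (hlevkB mj)
    simpa using h
  -- variance decompositions
  have hvarYj : variance (Y j) ν
      = (∫ ω, (εjk ω - δjk) ^ 2 ∂ν)
        + 2 * (∫ ω, (εjk ω - δjk) * (μjk (X ω) - mj) ∂ν)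
        + ∫ ω, (μjk (X ω) - mj) ^ 2 ∂ν := by
    rw [Stmt14Aux.variance_eq' hYj2ν, show (∫ x, Y j x ∂ν) = θjk from hθjk.symm]
    have h : ∀ ω, (Y j ω - θjk) ^ 2
        = (εjk ω - δjk) ^ 2 + 2 * ((εjk ω - δjk) * (μjk (X ω) - mj))
          + (μjk (X ω) - mj) ^ 2 := by
      intro ω
      have hd : Y j ω - θjk = (εjk ω - δjk) + (μjk (X ω) - mj) := by
        rw [hεjk ω, hθj]; ring
      rw [hd]; ring
    simp only [h]
    have i1 : Integrable (fun ω => (εjk ω - δjk) ^ 2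
        + 2 * ((εjk ω - δjk) * (μjk (X ω) - mj))) ν := iAj2.add (iABj.const_mul 2)
    have i2 : Integrable (fun ω => 2 * ((εjk ω - δjk) * (μjk (X ω) - mj))) ν :=
      iABj.const_mul 2
    rw [integral_add i1 iBj2, integral_add iAj2 i2, integral_const_mul]
  have hvarYk : variance (Y k) ν
      = (∫ ω, (εkj ω - δkj) ^ 2 ∂ν)
        + 2 * (∫ ω, (εkj ω - δkj) * (μkj (X ω) - mk) ∂ν)
        + ∫ ω, (μkj (X ω) - mk) ^ 2 ∂ν := by
    rw [Stmt14Aux.variance_eq' hYk2ν, show (∫ x, Y k x ∂ν) = θkj from hθkj.symm]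
    have h : ∀ ω, (Y k ω - θkj) ^ 2
        = (εkj ω - δkj) ^ 2 + 2 * ((εkj ω - δkj) * (μkj (X ω) - mk))
          + (μkj (X ω) - mk) ^ 2 := by
      intro ω
      have hd : Y k ω - θkj = (εkj ω - δkj) + (μkj (X ω) - mk) := by
        rw [hεkj ω, hθk]; ring
      rw [hd]; ring
    simp only [h]
    have i1 : Integrable (fun ω => (εkj ω - δkj) ^ 2
        + 2 * ((εkj ω - δkj) * (μkj (X ω) - mk))) ν := iCk2.add (iCDk.const_mul 2)
    have i2 : Integrable (fun ω => 2 * ((εkj ω - δkj) * (μkj (X ω) - mk))) ν :=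
      iCDk.const_mul 2
    rw [integral_add i1 iDk2, integral_add iCk2 i2, integral_const_mul]
  have hvarεj : variance εjk ν = ∫ ω, (εjk ω - δjk) ^ 2 ∂ν := by
    rw [Stmt14Aux.variance_eq' hεjkν, show (∫ x, εjk x ∂ν) = δjk from hδjk.symm]
  have hvarεk : variance εkj ν = ∫ ω, (εkj ω - δkj) ^ 2 ∂ν := by
    rw [Stmt14Aux.variance_eq' hεkjν, show (∫ x, εkj x ∂ν) = δkj from hδkj.symm]
  have hlamj : lamjk = ∫ ω, (μjk (X ω) - mj) ^ 2 ∂ν := by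
    rw [hlamjk, hvarYj, hvarεj, Z3]; ring
  have hlamk : lamkj = ∫ ω, (μkj (X ω) - mk) ^ 2 ∂ν := by
    rw [hlamkj, hvarYk, hvarεk, Z4]; ring
  -- diagonal decompositions
  have hE00 : ∫ ω, (Y j ω - θjk) ^ 2 / π j (Z ω) ∂ν
      = (∫ ω, (εjk ω - δjk) ^ 2 / π j (Z ω) ∂ν)
        + (∫ ω, (μjk (X ω) - mj) ^ 2 * (1 / π j (Z ω) - 1) ∂ν)
        + ∫ ω, (μjk (X ω) - mj) ^ 2 ∂ν := by
    simp only [hptj]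
    have i2 : Integrable (fun ω => 2 * ((εjk ω - δjk) * (μjk (X ω) - mj)
        * (π j (Z ω))⁻¹)) ν := icrossj.const_mul 2
    have i12 : Integrable (fun ω => (εjk ω - δjk) ^ 2 / π j (Z ω)
        + 2 * ((εjk ω - δjk) * (μjk (X ω) - mj) * (π j (Z ω))⁻¹)) ν := hIntjε.add i2
    have i123 : Integrable (fun ω => (εjk ω - δjk) ^ 2 / π j (Z ω)
        + 2 * ((εjk ω - δjk) * (μjk (X ω) - mj) * (π j (Z ω))⁻¹)
        + (μjk (X ω) - mj) ^ 2 * (1 / π j (Z ω) - 1)) ν := i12.add hIntjμ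
    rw [integral_add i123 iBj2, integral_add i12 hIntjμ, integral_add hIntjε i2,
      integral_const_mul, Z1]
    ring
  have hE11 : ∫ ω, (Y k ω - θkj) ^ 2 / π k (Z ω) ∂ν
      = (∫ ω, (εkj ω - δkj) ^ 2 / π k (Z ω) ∂ν)
        + (∫ ω, (μkj (X ω) - mk) ^ 2 * (1 / π k (Z ω) - 1) ∂ν)
        + ∫ ω, (μkj (X ω) - mk) ^ 2 ∂ν := by
    simp only [hptk]
    have i2 : Integrable (fun ω => 2 * ((εkj ω - δkj) * (μkj (X ω) - mk)
        * (π k (Z ω))⁻¹)) ν := icrossk.const_mul 2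
    have i12 : Integrable (fun ω => (εkj ω - δkj) ^ 2 / π k (Z ω)
        + 2 * ((εkj ω - δkj) * (μkj (X ω) - mk) * (π k (Z ω))⁻¹)) ν := hIntkε.add i2
    have i123 : Integrable (fun ω => (εkj ω - δkj) ^ 2 / π k (Z ω)
        + 2 * ((εkj ω - δkj) * (μkj (X ω) - mk) * (π k (Z ω))⁻¹)
        + (μkj (X ω) - mk) ^ 2 * (1 / π k (Z ω) - 1)) ν := i12.add hIntkμ
    rw [integral_add i123 iDk2, integral_add i12 hIntkμ, integral_add hIntkε i2,
      integral_const_mul, Z2]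
    ring
  -- the covariance identity
  have hcovBD : cov ν (fun x => μjk (X x)) (fun x => μkj (X x))
      = ∫ ω, (μjk (X ω) - mj) * (μkj (X ω) - mk) ∂ν := by
    rw [cov, ← hmj, ← hmk]
  have hcovεε : cov ν εjk εkj = ∫ ω, (εjk ω - δjk) * (εkj ω - δkj) ∂ν := by
    rw [cov, show (∫ x, εjk x ∂ν) = δjk from hδjk.symm,
      show (∫ x, εkj x ∂ν) = δkj from hδkj.symm]
  have hcovYY : cov ν (Y j) (Y k)
      = ∫ ω, ((εjk ω - δjk) * (εkj ω - δkj) + (εjk ω - δjk) * (μkj (X ω) - mk)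
          + (εkj ω - δkj) * (μjk (X ω) - mj)
          + (μjk (X ω) - mj) * (μkj (X ω) - mk)) ∂ν := by
    rw [cov, show (∫ x, Y j x ∂ν) = θjk from hθjk.symm,
      show (∫ x, Y k x ∂ν) = θkj from hθkj.symm]
    refine integral_congr_ae (ae_of_all _ fun ω => ?_)
    show (Y j ω - θjk) * (Y k ω - θkj)
        = (εjk ω - δjk) * (εkj ω - δkj) + (εjk ω - δjk) * (μkj (X ω) - mk)
          + (εkj ω - δkj) * (μjk (X ω) - mj) + (μjk (X ω) - mj) * (μkj (X ω) - mk)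
    rw [hεjk ω, hεkj ω, hθj, hθk]
    ring
  have hcjk' : cjk = cov ν (fun x => μjk (X x)) (fun x => μkj (X x)) := by
    have i12 : Integrable (fun ω => (εjk ω - δjk) * (εkj ω - δkj)
        + (εjk ω - δjk) * (μkj (X ω) - mk)) ν := iAC.add iAD
    have i123 : Integrable (fun ω => (εjk ω - δjk) * (εkj ω - δkj)
        + (εjk ω - δjk) * (μkj (X ω) - mk)
        + (εkj ω - δkj) * (μjk (X ω) - mj)) ν := i12.add iCB
    rw [hcjk, hcovYY, hcovεε, hcovBD,
      integral_add i123 iBD, integral_add i12 iCB, integral_add iAC iAD, Z5, Z6]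
    ring
  constructor
  · -- the matrix identity
    rw [hSsipw, hSsaipw, hM]
    ext i i'
    fin_cases i <;> fin_cases i' <;>
      simp only [Matrix.sub_apply, Matrix.add_apply, Fin.zero_eta, Fin.mk_one,
        Matrix.of_apply, Matrix.cons_val', Matrix.cons_val_zero,
        Matrix.cons_val_one, Matrix.head_cons, Matrix.empty_val', Matrix.cons_val_fin_one,
        Matrix.head_fin_const, Fin.isValue]
    · linarith [hE00, hlamj]
    · linarith [hcjk']
    · linarith [hcjk']
    · linarith [hE11, hlamk]
  · -- positive semidefiniteness
    intro hsum
    rw [Matrix.posSemidef_iff_dotProduct_mulVec]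
    constructor
    · -- Hermitian
      rw [hM]
      ext i i'
      fin_cases i <;> fin_cases i' <;>
        simp [Matrix.conjTranspose_apply]
    · intro x
      have key : 0 ≤ ∫ ω,
          (x 0 ^ 2 * ((μjk (X ω) - mj) ^ 2 * (1 / π j (Z ω) - 1))
            + x 1 ^ 2 * ((μkj (X ω) - mk) ^ 2 * (1 / π k (Z ω) - 1))
            - 2 * (x 0 * x 1) * ((μjk (X ω) - mj) * (μkj (X ω) - mk))) ∂ν := by
        apply integral_nonneg_of_ae
        filter_upwards [haeECE, hsum] with ω hpos hs
        have heq : x 0 ^ 2 * ((μjk (X ω) - mj) ^ 2 * (1 / π j (Z ω) - 1))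
              + x 1 ^ 2 * ((μkj (X ω) - mk) ^ 2 * (1 / π k (Z ω) - 1))
              - 2 * (x 0 * x 1) * ((μjk (X ω) - mj) * (μkj (X ω) - mk))
            = (x 0 * (μjk (X ω) - mj)) ^ 2 * (1 / π j (Z ω) - 1)
              + (x 1 * (μkj (X ω) - mk)) ^ 2 * (1 / π k (Z ω) - 1)
              - 2 * ((x 0 * (μjk (X ω) - mj)) * (x 1 * (μkj (X ω) - mk))) := by ring
        simp only [Pi.zero_apply]
        rw [heq]
        exact Stmt14Aux.quad_nonneg _ _ _ _ hpos.1 hpos.2 hs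
      have hval : ∫ ω,
          (x 0 ^ 2 * ((μjk (X ω) - mj) ^ 2 * (1 / π j (Z ω) - 1))
            + x 1 ^ 2 * ((μkj (X ω) - mk) ^ 2 * (1 / π k (Z ω) - 1))
            - 2 * (x 0 * x 1) * ((μjk (X ω) - mj) * (μkj (X ω) - mk))) ∂ν
          = x 0 ^ 2 * (∫ ω, (μjk (X ω) - mj) ^ 2 * (1 / π j (Z ω) - 1) ∂ν)
            + x 1 ^ 2 * (∫ ω, (μkj (X ω) - mk) ^ 2 * (1 / π k (Z ω) - 1) ∂ν)
            - 2 * (x 0 * x 1) * (∫ ω, (μjk (X ω) - mj) * (μkj (X ω) - mk) ∂ν) := by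
        have i1 : Integrable (fun ω => x 0 ^ 2 * ((μjk (X ω) - mj) ^ 2
            * (1 / π j (Z ω) - 1))) ν := hIntjμ.const_mul _
        have i2 : Integrable (fun ω => x 1 ^ 2 * ((μkj (X ω) - mk) ^ 2
            * (1 / π k (Z ω) - 1))) ν := hIntkμ.const_mul _
        have i3 : Integrable (fun ω => 2 * (x 0 * x 1)
            * ((μjk (X ω) - mj) * (μkj (X ω) - mk))) ν := iBD.const_mul _
        have i12 : Integrable (fun ω => x 0 ^ 2 * ((μjk (X ω) - mj) ^ 2
            * (1 / π j (Z ω) - 1)) + x 1 ^ 2 * ((μkj (X ω) - mk) ^ 2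
            * (1 / π k (Z ω) - 1))) ν := i1.add i2
        rw [integral_sub i12 i3, integral_add i1 i2,
          integral_const_mul, integral_const_mul, integral_const_mul]
      rw [hM]
      simp only [dotProduct, Matrix.mulVec, Fin.sum_univ_two, Pi.star_apply,
        star_trivial, Matrix.of_apply, Matrix.cons_val', Matrix.cons_val_zero,
        Matrix.cons_val_one, Matrix.head_cons, Matrix.empty_val', Matrix.cons_val_fin_one,
        Matrix.head_fin_const, Fin.isValue]
      refine le_trans key (le_of_eq ?_)
      rw [hval, hcovBD]
      ring
end
end

section
/- (Corollary 4.) Under Assumption 1 and the stratification setup, assume conditions (i)–(iii): (i) E_jk(ε_jk | S) = δ_jk and E_jk(ε_kj | S) = δ_kj almost surely; (ii) Cov_jk(ε_jk, μ_jk(X) | S) = 0 and Cov_jk(ε_kj, μ_kj(X) | S) = 0 almost surely; (iii) Cov_jk(ε_jk, μ_kj(X) | S) = 0 and Cov_jk(ε_kj, μ_jk(X) | S) = 0 almost surely. Let Σ_ps = diag( E_jk[Var_jk(Y^(j)|S)/π_j(S)], E_jk[Var_jk(Y^(k)|S)/π_k(S)] ) + Γ_jk and Σ_aps = E_jk[ diag(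 Var_jk(ε_jk|S)/π_j(S), Var_jk(ε_kj|S)/π_k(S) ) + Λ_jk(S) ] + Γ_jk, where Γ_jk is the ECE-conditional covariance matrix of (E_jk(Y^(j)|S), E_jk(Y^(k)|S)) and Λ_jk(S) has diagonal entries λ_jk(S) = Var_jk(Y^(j)|S) − Var_jk(ε_jk|S), λ_kj(S) = Var_jk(Y^(k)|S) − Var_jk(ε_kj|S) and off-diagonal entries c_jk(S) = Cov_jk(Y^(j),Y^(k)|S) − Cov_jk(ε_jk,ε_kj|S). Then Σ_ps − Σ_aps equals the 2×2 matrix with diagonal entries E_jk[ (1/π_j(S) − 1) Var_jk(μ_jk(X)|S) ] and E_jk[ (1/π_k(S) − 1) Var_jk(μ_kj(X)|S) ] and both off-diagonal entries −E_jk[ Cov_jk(μ_jk(X), μ_kj(X) | S) ]; moreover, if π_j(S) + π_k(S) ≤ 1 almost surely on the ECE event, this matrix is positive semidefinite. -/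
open MeasureTheory ProbabilityTheory Filter Set

noncomputable section

namespace Stmt15Aux

variable {Ω : Type*} [MeasurableSpace Ω] {μ : Measure Ω} {f g h f' g' : Ω → ℝ}

lemma integrable_mul₂ (hf : MemLp f 2 μ) (hg : MemLp g 2 μ) :
    Integrable (fun ω => f ω * g ω) μ := by
  have h2 : (1 : ENNReal) / 1 = 1 / 2 + 1 / 2 := by
    rw [ENNReal.add_halves, one_div_one]
  have h3 : MemLp (f • g) 1 μ := hg.smul hf
  rw [memLp_one_iff_integrable] at h3
  exact h3

lemma cov_comm (μ : Measure Ω) (f g : Ω → ℝ) : cov μ f g = cov μ g f := by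
  unfold cov
  exact integral_congr_ae (Eventually.of_forall fun ω => mul_comm _ _)

lemma variance_eq_cov [IsProbabilityMeasure μ] (hf : MemLp f 2 μ) :
    variance f μ = cov μ f f := by
  refine (variance_eq_integral hf.aemeasurable).trans ?_
  exact integral_congr_ae (Eventually.of_forall fun ω => by
    simp [Pi.pow_apply, Pi.sub_apply, sq])

lemma cov_add_left [IsProbabilityMeasure μ] (hf : MemLp f 2 μ) (hg : MemLp g 2 μ)
    (hh : MemLp h 2 μ) :
    cov μ (fun ω => f ω + g ω) h = cov μ f h + cov μ g h := by
  have hfg : ∫ ω, (f ω + g ω) ∂μ = (∫ ω, f ω ∂μ) + ∫ ω, g ω ∂μ :=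
    integral_add (hf.integrable one_le_two) (hg.integrable one_le_two)
  have h1 : Integrable (fun ω => (f ω - ∫ x, f x ∂μ) * (h ω - ∫ x, h x ∂μ)) μ :=
    integrable_mul₂ (hf.sub (memLp_const _)) (hh.sub (memLp_const _))
  have h2 : Integrable (fun ω => (g ω - ∫ x, g x ∂μ) * (h ω - ∫ x, h x ∂μ)) μ :=
    integrable_mul₂ (hg.sub (memLp_const _)) (hh.sub (memLp_const _))
  unfold cov
  rw [hfg, ← integral_add h1 h2]
  exact integral_congr_ae (Eventually.of_forall fun ω => by ring)

lemma cov_add_add [IsProbabilityMeasure μ] (hf : MemLp f 2 μ) (hg : MemLp g 2 μ)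
    (hf' : MemLp f' 2 μ) (hg' : MemLp g' 2 μ) :
    cov μ (fun ω => f ω + g ω) (fun ω => f' ω + g' ω)
      = cov μ f f' + cov μ f g' + cov μ g f' + cov μ g g' := by
  rw [cov_add_left (h := fun ω => f' ω + g' ω) hf hg (hf'.add hg')]
  rw [cov_comm μ f, cov_add_left hf' hg' hf, cov_comm μ g, cov_add_left hf' hg' hg,
    cov_comm μ f' f, cov_comm μ g' f, cov_comm μ f' g, cov_comm μ g' g]
  ring

lemma variance_add [IsProbabilityMeasure μ] (hf : MemLp f 2 μ) (hg : MemLp g 2 μ) :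
    variance (fun ω => f ω + g ω) μ = variance f μ + variance g μ + 2 * cov μ f g := by
  rw [variance_eq_cov (f := fun ω => f ω + g ω) (hf.add hg), cov_add_add hf hg hf hg,
    ← variance_eq_cov hf, ← variance_eq_cov hg, cov_comm μ g f]
  ring

lemma integral_mul_sq_le [IsFiniteMeasure μ] (hf : MemLp f 2 μ) (hg : MemLp g 2 μ) :
    (∫ ω, f ω * g ω ∂μ) ^ 2 ≤ (∫ ω, f ω ^ 2 ∂μ) * ∫ ω, g ω ^ 2 ∂μ := by
  have hA : Integrable (fun ω => f ω ^ 2) μ := hf.integrable_sq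
  have hB : Integrable (fun ω => g ω ^ 2) μ := hg.integrable_sq
  have hC : Integrable (fun ω => f ω * g ω) μ := integrable_mul₂ hf hg
  have key : ∀ t : ℝ,
      0 ≤ (∫ ω, f ω ^ 2 ∂μ) * (t * t) + (2 * ∫ ω, f ω * g ω ∂μ) * t + ∫ ω, g ω ^ 2 ∂μ := by
    intro t
    have h0 : 0 ≤ ∫ ω, (t * f ω + g ω) ^ 2 ∂μ := integral_nonneg fun ω => sq_nonneg _
    have e1 : ∫ ω, (t * f ω + g ω) ^ 2 ∂μ
        = ∫ ω, ((t * t) * f ω ^ 2 + ((2 * t) * (f ω * g ω) + g ω ^ 2)) ∂μ :=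
      integral_congr_ae (Eventually.of_forall fun ω => by ring)
    have i1 : Integrable (fun ω => (t * t) * f ω ^ 2) μ := hA.const_mul _
    have i2 : Integrable (fun ω => (2 * t) * (f ω * g ω) + g ω ^ 2) μ :=
      (hC.const_mul _).add hB
    have i3 : Integrable (fun ω => (2 * t) * (f ω * g ω)) μ := hC.const_mul _
    rw [e1, integral_add i1 i2, integral_add i3 hB, integral_const_mul,
      integral_const_mul] at h0
    nlinarith [h0]
  have hd := discrim_le_zero key
  rw [discrim] at hd
  nlinarith [hd]

lemma abs_integral_mul_le [IsFiniteMeasure μ] (hf : MemLp f 2 μ) (hg : MemLp g 2 μ) :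
    |∫ ω, f ω * g ω ∂μ| ≤ Real.sqrt (∫ ω, f ω ^ 2 ∂μ) * Real.sqrt (∫ ω, g ω ^ 2 ∂μ) := by
  have hA : 0 ≤ ∫ ω, f ω ^ 2 ∂μ := integral_nonneg fun ω => sq_nonneg _
  calc |∫ ω, f ω * g ω ∂μ| = Real.sqrt ((∫ ω, f ω * g ω ∂μ) ^ 2) :=
        (Real.sqrt_sq_eq_abs _).symm
    _ ≤ Real.sqrt ((∫ ω, f ω ^ 2 ∂μ) * ∫ ω, g ω ^ 2 ∂μ) :=
        Real.sqrt_le_sqrt (integral_mul_sq_le hf hg)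
    _ = _ := Real.sqrt_mul hA _

lemma abs_cov_le [IsProbabilityMeasure μ] (hf : MemLp f 2 μ) (hg : MemLp g 2 μ) :
    |cov μ f g| ≤ Real.sqrt (variance f μ) * Real.sqrt (variance g μ) := by
  have h := abs_integral_mul_le (μ := μ) (hf.sub (memLp_const (∫ x, f x ∂μ)))
    (hg.sub (memLp_const (∫ x, g x ∂μ)))
  have ef : variance f μ = ∫ ω, (f ω - ∫ x, f x ∂μ) ^ 2 ∂μ := by
    refine (variance_eq_integral hf.aemeasurable).trans ?_
    exact integral_congr_ae (Eventually.of_forall fun ω => by simp)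
  have eg : variance g μ = ∫ ω, (g ω - ∫ x, g x ∂μ) ^ 2 ∂μ := by
    refine (variance_eq_integral hg.aemeasurable).trans ?_
    exact integral_congr_ae (Eventually.of_forall fun ω => by simp)
  rw [ef, eg]
  exact h

lemma variance_zero_measure (f : Ω → ℝ) : variance f (0 : Measure Ω) = 0 := by
  simp [ProbabilityTheory.variance, ProbabilityTheory.evariance]

end Stmt15Aux

/-- Corollary 4: under the calibration conditions (i)–(iii),
Σ_ps − Σ_aps has the displayed form and is positive semidefinite. -/
theorem stmt_15
    {Ω 𝓩 𝓦 : Type*} [MeasurableSpace Ω] [StandardBorelSpace Ω]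
    [MeasurableSpace 𝓩] [MeasurableSpace 𝓦]
    (P : Measure Ω) [IsProbabilityMeasure P]
    {J : ℕ} (Z : Ω → 𝓩) (W : Ω → 𝓦) (A : Ω → Fin J) (Y : Fin J → Ω → ℝ)
    (hZ : Measurable Z) (hW : Measurable W) (hA : Measurable A)
    (hY : ∀ m, Measurable (Y m)) (hY2 : ∀ m, MemLp (Y m) 2 P)
    (π : Fin J → 𝓩 → ℝ) (hπmeas : ∀ m, Measurable (π m))
    (hπ01 : ∀ m z, π m z ∈ Set.Icc (0:ℝ) 1)
    (hπsum : ∀ z, ∑ m, π m z = 1)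
    -- Assumption 1: A ⟂ (W, Y^(1),…,Y^(J)) given Z
    (hCI : CondIndepFun (MeasurableSpace.comap Z inferInstance) hZ.comap_le A
        (fun ω => (W ω, fun m => Y m ω)) P)
    -- Assumption 1: P(A = m | Z) = π_m(Z) a.s.
    (hprop : ∀ m : Fin J,
      (P[ Set.indicator {ω' | A ω' = m} (fun _ => (1:ℝ)) | MeasurableSpace.comap Z inferInstance])
        =ᵐ[P] fun ω => π m (Z ω))
    (j k : Fin J) (hjk : j ≠ k)
    -- the ECE event, with positive probability
    (ECE : Set Ω) (hECE : ECE = {ω | 0 < π j (Z ω) ∧ 0 < π k (Z ω)})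
    (hECEpos : P ECE ≠ 0)
    -- stratification: S is a function of Z with finitely many values, and π_j(Z), π_k(Z)
    -- are constant on every level of S
    {𝓢 : Type*} [Fintype 𝓢] [MeasurableSpace 𝓢] [MeasurableSingletonClass 𝓢]
    (S : Ω → 𝓢) (hSZ : ∃ g : 𝓩 → 𝓢, Measurable g ∧ ∀ ω, S ω = g (Z ω))
    (hconstj : ∀ ω ω', S ω = S ω' → π j (Z ω) = π j (Z ω'))
    (hconstk : ∀ ω ω', S ω = S ω' → π k (Z ω) = π k (Z ω'))
    -- working model: a covariate sub-vector X of W and a function μjk of X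
    {𝓧 : Type*} [MeasurableSpace 𝓧]
    (X : Ω → 𝓧) (hXW : ∃ g : 𝓦 → 𝓧, Measurable g ∧ ∀ ω, X ω = g (W ω))
    (μjk : 𝓧 → ℝ) (hμjkm : Measurable μjk) (hμjk2 : MemLp (fun ω => μjk (X ω)) 2 P)
    (μkj : 𝓧 → ℝ) (hμkjm : Measurable μkj) (hμkj2 : MemLp (fun ω => μkj (X ω)) 2 P)
    -- residuals and δ's
    (εjk εkj : Ω → ℝ)
    (hεjk : ∀ ω, εjk ω = Y j ω - μjk (X ω)) (hεkj : ∀ ω, εkj ω = Y k ω - μkj (X ω))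
    (δjk δkj : ℝ)
    (hδjk : δjk = ∫ ω, εjk ω ∂P[|ECE]) (hδkj : δkj = ∫ ω, εkj ω ∂P[|ECE])
    -- conditions (i)–(iii)
    (hU1 : ∀ᵐ ω ∂P[|ECE], condMeanOn P[|ECE] S εjk ω = δjk)
    (hU2 : ∀ᵐ ω ∂P[|ECE], condMeanOn P[|ECE] S εkj ω = δkj)
    (hii1 : ∀ᵐ ω ∂P[|ECE], condCovOn P[|ECE] S εjk (fun x => μjk (X x)) ω = 0)
    (hii2 : ∀ᵐ ω ∂P[|ECE], condCovOn P[|ECE] S εkj (fun x => μkj (X x)) ω = 0)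
    (hiii1 : ∀ᵐ ω ∂P[|ECE], condCovOn P[|ECE] S εjk (fun x => μkj (X x)) ω = 0)
    (hiii2 : ∀ᵐ ω ∂P[|ECE], condCovOn P[|ECE] S εkj (fun x => μjk (X x)) ω = 0)
    -- the matrices
    (Γjk Sps Saps M : Matrix (Fin 2) (Fin 2) ℝ)
    (hΓjk : Γjk =
      !![variance (condMeanOn P[|ECE] S (Y j)) P[|ECE],
           cov P[|ECE] (condMeanOn P[|ECE] S (Y j)) (condMeanOn P[|ECE] S (Y k));
         cov P[|ECE] (condMeanOn P[|ECE] S (Y j)) (condMeanOn P[|ECE] S (Y k)),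
           variance (condMeanOn P[|ECE] S (Y k)) P[|ECE]])
    (hSps : Sps =
      !![∫ ω, condVarOn P[|ECE] S (Y j) ω / π j (Z ω) ∂P[|ECE], 0;
         0, ∫ ω, condVarOn P[|ECE] S (Y k) ω / π k (Z ω) ∂P[|ECE]]
      + Γjk)
    (hSaps : Saps =
      !![∫ ω, (condVarOn P[|ECE] S εjk ω / π j (Z ω)
              + (condVarOn P[|ECE] S (Y j) ω - condVarOn P[|ECE] S εjk ω)) ∂P[|ECE],
           ∫ ω, (condCovOn P[|ECE] S (Y j) (Y k) ω - condCovOn P[|ECE] S εjk εkj ω) ∂P[|ECE];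
         ∫ ω, (condCovOn P[|ECE] S (Y j) (Y k) ω - condCovOn P[|ECE] S εjk εkj ω) ∂P[|ECE],
           ∫ ω, (condVarOn P[|ECE] S εkj ω / π k (Z ω)
              + (condVarOn P[|ECE] S (Y k) ω - condVarOn P[|ECE] S εkj ω)) ∂P[|ECE]]
      + Γjk)
    (hM : M =
      !![∫ ω, (1 / π j (Z ω) - 1) * condVarOn P[|ECE] S (fun x => μjk (X x)) ω ∂P[|ECE],
           -∫ ω, condCovOn P[|ECE] S (fun x => μjk (X x)) (fun x => μkj (X x)) ω ∂P[|ECE];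
         -∫ ω, condCovOn P[|ECE] S (fun x => μjk (X x)) (fun x => μkj (X x)) ω ∂P[|ECE],
           ∫ ω, (1 / π k (Z ω) - 1) * condVarOn P[|ECE] S (fun x => μkj (X x)) ω ∂P[|ECE]]) :
    Sps - Saps = M
    ∧ ((∀ᵐ ω ∂P[|ECE], π j (Z ω) + π k (Z ω) ≤ 1) → M.PosSemidef) := by
    classical
  obtain ⟨gS, hgSm, hgSZ⟩ := hSZ
  have hS : Measurable S := by
    have hSe : S = fun ω => gS (Z ω) := funext hgSZ
    rw [hSe]; exact hgSm.comp hZ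
  have hECEm : MeasurableSet ECE := by
    rw [hECE, Set.setOf_and]
    exact (measurableSet_lt measurable_const ((hπmeas j).comp hZ)).inter
      (measurableSet_lt measurable_const ((hπmeas k).comp hZ))
  haveI hPP : IsProbabilityMeasure (P[|ECE]) := cond_isProbabilityMeasure hECEpos
  have hcond2 : ∀ {ν : Measure Ω} (t : Set Ω) {f : Ω → ℝ},
      MemLp f 2 ν → MemLp f 2 (ν[|t]) := by
    intro ν t f hf
    by_cases ht : ν t = 0
    · have h0 : ν[|t] = 0 := by
        rw [ProbabilityTheory.cond, Measure.restrict_eq_zero.mpr ht, smul_zero]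
      rw [h0]
      exact hf.mono_measure (Measure.zero_le ν)
    · exact (hf.restrict t).smul_measure (ENNReal.inv_ne_top.mpr ht)
  have hstrat0 : ∀ s : 𝓢, (P[|ECE]) {ω' | S ω' = s} = 0 →
      (P[|ECE])[|{ω' | S ω' = s}] = 0 := by
    intro s hs
    rw [ProbabilityTheory.cond, Measure.restrict_eq_zero.mpr hs, smul_zero]
  have hμjk2' : MemLp (fun ω => μjk (X ω)) 2 (P[|ECE]) := hcond2 _ hμjk2
  have hμkj2' : MemLp (fun ω => μkj (X ω)) 2 (P[|ECE]) := hcond2 _ hμkj2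
  have hYj2' : MemLp (Y j) 2 (P[|ECE]) := hcond2 _ (hY2 j)
  have hYk2' : MemLp (Y k) 2 (P[|ECE]) := hcond2 _ (hY2 k)
  have hεfun : εjk = fun ω => Y j ω - μjk (X ω) := funext hεjk
  have hεfun' : εkj = fun ω => Y k ω - μkj (X ω) := funext hεkj
  have hεjk2' : MemLp εjk 2 (P[|ECE]) := by rw [hεfun]; exact hYj2'.sub hμjk2'
  have hεkj2' : MemLp εkj 2 (P[|ECE]) := by rw [hεfun']; exact hYk2'.sub hμkj2'
  have hYjfun : Y j = fun ω => εjk ω + μjk (X ω) := funext fun ω => by rw [hεjk ω]; ring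
  have hYkfun : Y k = fun ω => εkj ω + μkj (X ω) := funext fun ω => by rw [hεkj ω]; ring
  -- conditional moments as functions of S
  obtain ⟨vY, hvY⟩ : ∃ v : 𝓢 → ℝ, ∀ ω, condVarOn (P[|ECE]) S (Y j) ω = v (S ω) :=
    ⟨fun s => variance (Y j) ((P[|ECE])[|{ω' | S ω' = s}]), fun _ => rfl⟩
  obtain ⟨vY', hvY'⟩ : ∃ v : 𝓢 → ℝ, ∀ ω, condVarOn (P[|ECE]) S (Y k) ω = v (S ω) :=
    ⟨fun s => variance (Y k) ((P[|ECE])[|{ω' | S ω' = s}]), fun _ => rfl⟩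
  obtain ⟨vE, hvE⟩ : ∃ v : 𝓢 → ℝ, ∀ ω, condVarOn (P[|ECE]) S εjk ω = v (S ω) :=
    ⟨fun s => variance εjk ((P[|ECE])[|{ω' | S ω' = s}]), fun _ => rfl⟩
  obtain ⟨vE', hvE'⟩ : ∃ v : 𝓢 → ℝ, ∀ ω, condVarOn (P[|ECE]) S εkj ω = v (S ω) :=
    ⟨fun s => variance εkj ((P[|ECE])[|{ω' | S ω' = s}]), fun _ => rfl⟩
  obtain ⟨vM, hvM⟩ : ∃ v : 𝓢 → ℝ,
      ∀ ω, condVarOn (P[|ECE]) S (fun x => μjk (X x)) ω = v (S ω) :=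
    ⟨fun s => variance (fun x => μjk (X x)) ((P[|ECE])[|{ω' | S ω' = s}]), fun _ => rfl⟩
  obtain ⟨vM', hvM'⟩ : ∃ v : 𝓢 → ℝ,
      ∀ ω, condVarOn (P[|ECE]) S (fun x => μkj (X x)) ω = v (S ω) :=
    ⟨fun s => variance (fun x => μkj (X x)) ((P[|ECE])[|{ω' | S ω' = s}]), fun _ => rfl⟩
  obtain ⟨cY, hcY⟩ : ∃ c : 𝓢 → ℝ, ∀ ω, condCovOn (P[|ECE]) S (Y j) (Y k) ω = c (S ω) :=
    ⟨fun s => cov ((P[|ECE])[|{ω' | S ω' = s}]) (Y j) (Y k), fun _ => rfl⟩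
  obtain ⟨cE, hcE⟩ : ∃ c : 𝓢 → ℝ, ∀ ω, condCovOn (P[|ECE]) S εjk εkj ω = c (S ω) :=
    ⟨fun s => cov ((P[|ECE])[|{ω' | S ω' = s}]) εjk εkj, fun _ => rfl⟩
  obtain ⟨cM, hcM⟩ : ∃ c : 𝓢 → ℝ,
      ∀ ω, condCovOn (P[|ECE]) S (fun x => μjk (X x)) (fun x => μkj (X x)) ω = c (S ω) :=
    ⟨fun s => cov ((P[|ECE])[|{ω' | S ω' = s}]) (fun x => μjk (X x)) (fun x => μkj (X x)),
      fun _ => rfl⟩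
  -- decomposition of conditional variances and covariances
  have hdecV : ∀ (e m : Ω → ℝ), MemLp e 2 (P[|ECE]) → MemLp m 2 (P[|ECE]) → ∀ ω,
      condVarOn (P[|ECE]) S (fun x => e x + m x) ω
        = condVarOn (P[|ECE]) S e ω + condVarOn (P[|ECE]) S m ω
          + 2 * condCovOn (P[|ECE]) S e m ω := by
    intro e m he hm ω
    simp only [condVarOn, condCovOn]
    by_cases hs : (P[|ECE]) {ω' | S ω' = S ω} = 0
    · rw [hstrat0 _ hs]
      simp [cov, Stmt15Aux.variance_zero_measure]
    · haveI := cond_isProbabilityMeasure (μ := P[|ECE]) hs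
      exact Stmt15Aux.variance_add (hcond2 _ he) (hcond2 _ hm)
  have hdecC : ∀ (e m e' m' : Ω → ℝ), MemLp e 2 (P[|ECE]) → MemLp m 2 (P[|ECE]) →
      MemLp e' 2 (P[|ECE]) → MemLp m' 2 (P[|ECE]) → ∀ ω,
      condCovOn (P[|ECE]) S (fun x => e x + m x) (fun x => e' x + m' x) ω
        = condCovOn (P[|ECE]) S e e' ω + condCovOn (P[|ECE]) S e m' ω
          + condCovOn (P[|ECE]) S m e' ω + condCovOn (P[|ECE]) S m m' ω := by
    intro e m e' m' he hm he' hm' ω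
    simp only [condCovOn]
    by_cases hs : (P[|ECE]) {ω' | S ω' = S ω} = 0
    · rw [hstrat0 _ hs]
      simp [cov]
    · haveI := cond_isProbabilityMeasure (μ := P[|ECE]) hs
      exact Stmt15Aux.cov_add_add (hcond2 _ he) (hcond2 _ hm) (hcond2 _ he') (hcond2 _ hm')
  have hccomm : ∀ (e m : Ω → ℝ) ω,
      condCovOn (P[|ECE]) S e m ω = condCovOn (P[|ECE]) S m e ω := by
    intro e m ω; simp only [condCovOn]; exact Stmt15Aux.cov_comm _ _ _
  -- a.e. identities from conditions (ii) and (iii)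
  have haeVj : ∀ᵐ ω ∂(P[|ECE]), vY (S ω) = vE (S ω) + vM (S ω) := by
    filter_upwards [hii1] with ω h0
    have hd := hdecV εjk (fun x => μjk (X x)) hεjk2' hμjk2' ω
    rw [← hYjfun] at hd
    rw [hvY ω, hvE ω, hvM ω, h0] at hd
    linarith
  have haeVk : ∀ᵐ ω ∂(P[|ECE]), vY' (S ω) = vE' (S ω) + vM' (S ω) := by
    filter_upwards [hii2] with ω h0
    have hd := hdecV εkj (fun x => μkj (X x)) hεkj2' hμkj2' ω
    rw [← hYkfun] at hd
    rw [hvY' ω, hvE' ω, hvM' ω, h0] at hd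
    linarith
  have haeC : ∀ᵐ ω ∂(P[|ECE]), cY (S ω) = cE (S ω) + cM (S ω) := by
    filter_upwards [hiii1, hiii2] with ω h1 h2
    have hd := hdecC εjk (fun x => μjk (X x)) εkj (fun x => μkj (X x))
      hεjk2' hμjk2' hεkj2' hμkj2' ω
    rw [← hYjfun, ← hYkfun] at hd
    rw [hcY ω, hcE ω, hcM ω, h1, hccomm (fun x => μjk (X x)) εkj ω, h2] at hd
    linarith
  -- the propensities as functions of S
  obtain ⟨pj, hpj⟩ : ∃ p : 𝓢 → ℝ, ∀ ω, π j (Z ω) = p (S ω) := by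
    refine ⟨fun s => if h : ∃ ω', S ω' = s then π j (Z h.choose) else 0, fun ω => ?_⟩
    show π j (Z ω) = if h : ∃ ω', S ω' = S ω then π j (Z h.choose) else 0
    rw [dif_pos (⟨ω, rfl⟩ : ∃ ω', S ω' = S ω)]
    exact hconstj ω _ (Exists.choose_spec (⟨ω, rfl⟩ : ∃ ω', S ω' = S ω)).symm
  obtain ⟨pk, hpk⟩ : ∃ p : 𝓢 → ℝ, ∀ ω, π k (Z ω) = p (S ω) := by
    refine ⟨fun s => if h : ∃ ω', S ω' = s then π k (Z h.choose) else 0, fun ω => ?_⟩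
    show π k (Z ω) = if h : ∃ ω', S ω' = S ω then π k (Z h.choose) else 0
    rw [dif_pos (⟨ω, rfl⟩ : ∃ ω', S ω' = S ω)]
    exact hconstk ω _ (Exists.choose_spec (⟨ω, rfl⟩ : ∃ ω', S ω' = S ω)).symm
  -- integrability of functions of S
  have hMS : ∀ h : 𝓢 → ℝ, MemLp (fun ω => h (S ω)) 2 (P[|ECE]) := by
    intro h
    obtain ⟨C, hC⟩ : ∃ C : ℝ, ∀ s, |h s| ≤ C := by
      obtain ⟨C, hC⟩ := (Set.finite_range fun s => |h s|).bddAbove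
      exact ⟨C, fun s => hC ⟨s, rfl⟩⟩
    exact MemLp.of_bound ((measurable_of_finite h).comp hS).aestronglyMeasurable C
      (Eventually.of_forall fun ω => by simpa [Real.norm_eq_abs] using hC (S ω))
  have hIS : ∀ h : 𝓢 → ℝ, Integrable (fun ω => h (S ω)) (P[|ECE]) :=
    fun h => (hMS h).integrable one_le_two
  -- a.e. positivity of the propensities
  have haeECE : ∀ᵐ ω ∂(P[|ECE]), 0 < π j (Z ω) ∧ 0 < π k (Z ω) := by
    have h0 : (P[|ECE]) ECEᶜ = 0 := by
      rw [ProbabilityTheory.cond_apply hECEm]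
      simp
    have hmem : ∀ᵐ ω ∂(P[|ECE]), ω ∈ ECE := by
      rw [ae_iff]
      exact h0
    filter_upwards [hmem] with ω hω
    rw [hECE] at hω; exact hω
  have hvMnn : ∀ ω, 0 ≤ vM (S ω) := fun ω => by
    rw [← hvM ω]; exact variance_nonneg _ _
  have hvM'nn : ∀ ω, 0 ≤ vM' (S ω) := fun ω => by
    rw [← hvM' ω]; exact variance_nonneg _ _
  -- pointwise Cauchy-Schwarz per stratum
  have hCSpt : ∀ ω, |cM (S ω)| ≤ Real.sqrt (vM (S ω)) * Real.sqrt (vM' (S ω)) := by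
    intro ω
    rw [← hcM ω, ← hvM ω, ← hvM' ω]
    simp only [condCovOn, condVarOn]
    by_cases hs : (P[|ECE]) {ω' | S ω' = S ω} = 0
    · rw [hstrat0 _ hs]
      simp [cov, Stmt15Aux.variance_zero_measure]
    · haveI := cond_isProbabilityMeasure (μ := P[|ECE]) hs
      exact Stmt15Aux.abs_cov_le (hcond2 _ hμjk2') (hcond2 _ hμkj2')
  -- scalar identities for the entries
  have e00 : (∫ ω, condVarOn (P[|ECE]) S (Y j) ω / π j (Z ω) ∂(P[|ECE]))
      - ∫ ω, (condVarOn (P[|ECE]) S εjk ω / π j (Z ω)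
          + (condVarOn (P[|ECE]) S (Y j) ω - condVarOn (P[|ECE]) S εjk ω)) ∂(P[|ECE])
      = ∫ ω, (1 / π j (Z ω) - 1)
          * condVarOn (P[|ECE]) S (fun x => μjk (X x)) ω ∂(P[|ECE]) := by
    simp only [hvY, hvE, hvM, hpj]
    rw [← integral_sub (hIS fun s => vY s / pj s)
      (hIS fun s => vE s / pj s + (vY s - vE s))]
    refine integral_congr_ae ?_
    filter_upwards [haeVj] with ω h0
    rw [h0]
    simp only [div_eq_mul_inv, one_div]
    ring
  have e11 : (∫ ω, condVarOn (P[|ECE]) S (Y k) ω / π k (Z ω) ∂(P[|ECE]))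
      - ∫ ω, (condVarOn (P[|ECE]) S εkj ω / π k (Z ω)
          + (condVarOn (P[|ECE]) S (Y k) ω - condVarOn (P[|ECE]) S εkj ω)) ∂(P[|ECE])
      = ∫ ω, (1 / π k (Z ω) - 1)
          * condVarOn (P[|ECE]) S (fun x => μkj (X x)) ω ∂(P[|ECE]) := by
    simp only [hvY', hvE', hvM', hpk]
    rw [← integral_sub (hIS fun s => vY' s / pk s)
      (hIS fun s => vE' s / pk s + (vY' s - vE' s))]
    refine integral_congr_ae ?_
    filter_upwards [haeVk] with ω h0
    rw [h0]
    simp only [div_eq_mul_inv, one_div]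
    ring
  have e01 : ∫ ω, (condCovOn (P[|ECE]) S (Y j) (Y k) ω
        - condCovOn (P[|ECE]) S εjk εkj ω) ∂(P[|ECE])
      = ∫ ω, condCovOn (P[|ECE]) S (fun x => μjk (X x)) (fun x => μkj (X x)) ω ∂(P[|ECE]) := by
    simp only [hcY, hcE, hcM]
    refine integral_congr_ae ?_
    filter_upwards [haeC] with ω h0
    rw [h0]
    ring
  constructor
  · rw [hSps, hSaps, add_sub_add_right_eq_sub, hM]
    ext i i'
    fin_cases i <;> fin_cases i' <;> simp [Matrix.sub_apply]
    · simpa [one_div] using e00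
    · exact e01
    · exact e01
    · simpa [one_div] using e11
  · intro hππ
    have main : ∀ a b c : ℝ, 0 ≤ a → 0 ≤ b → |c| ≤ Real.sqrt a * Real.sqrt b →
        (!![a, -c; -c, b] : Matrix (Fin 2) (Fin 2) ℝ).PosSemidef := by
      intro a b c ha hb hc
      obtain ⟨hc1, hc2⟩ := abs_le.mp hc
      rw [Matrix.posSemidef_iff_dotProduct_mulVec]
      constructor
      · show Matrix.conjTranspose !![a, -c; -c, b] = !![a, -c; -c, b]
        ext i i'
        fin_cases i <;> fin_cases i' <;>
          simp [Matrix.conjTranspose_apply]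
      · intro x
        have hx : dotProduct (star x) (Matrix.mulVec !![a, -c; -c, b] x)
            = a * (x 0 * x 0) + b * (x 1 * x 1) - 2 * c * (x 0 * x 1) := by
          simp [dotProduct, Matrix.mulVec, Fin.sum_univ_two]
          ring
        rw [hx, ← Real.sq_sqrt ha, ← Real.sq_sqrt hb]
        rcases le_total 0 (x 0 * x 1) with h | h
        · nlinarith [sq_nonneg (Real.sqrt a * x 0 - Real.sqrt b * x 1),
            mul_nonneg (sub_nonneg.mpr hc2) h]
        · nlinarith [sq_nonneg (Real.sqrt a * x 0 + Real.sqrt b * x 1),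
            mul_nonneg (by linarith : (0:ℝ) ≤ Real.sqrt a * Real.sqrt b + c)
              (by linarith : (0:ℝ) ≤ -(x 0 * x 1))]
    rw [hM]
    simp only [hvM, hvM', hcM, hpj, hpk]
    -- nonnegativity of the diagonal entries
    have hwae : ∀ᵐ ω ∂(P[|ECE]), 0 ≤ 1 / pj (S ω) - 1 ∧ 0 ≤ 1 / pk (S ω) - 1 ∧
        1 ≤ (1 / pj (S ω) - 1) * (1 / pk (S ω) - 1) := by
      filter_upwards [haeECE, hππ] with ω hmem hsum
      obtain ⟨hj0, hk0⟩ := hmem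
      rw [hpj ω] at hj0 hsum
      rw [hpk ω] at hk0 hsum
      have h1j : 1 ≤ 1 / pj (S ω) := by rw [le_div_iff₀ hj0]; linarith
      have h1k : 1 ≤ 1 / pk (S ω) := by rw [le_div_iff₀ hk0]; linarith
      refine ⟨by linarith, by linarith, ?_⟩
      have e1 : 1 / pj (S ω) - 1 = (1 - pj (S ω)) / pj (S ω) := by field_simp
      have e2 : 1 / pk (S ω) - 1 = (1 - pk (S ω)) / pk (S ω) := by field_simp
      rw [e1, e2, div_mul_div_comm, le_div_iff₀ (by positivity)]
      nlinarith
    have ha : 0 ≤ ∫ ω, (1 / pj (S ω) - 1) * vM (S ω) ∂(P[|ECE]) := by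
      refine integral_nonneg_of_ae ?_
      filter_upwards [hwae] with ω hw
      exact mul_nonneg hw.1 (hvMnn ω)
    have hb : 0 ≤ ∫ ω, (1 / pk (S ω) - 1) * vM' (S ω) ∂(P[|ECE]) := by
      refine integral_nonneg_of_ae ?_
      filter_upwards [hwae] with ω hw
      exact mul_nonneg hw.2.1 (hvM'nn ω)
    have habs : |∫ ω, cM (S ω) ∂(P[|ECE])|
        ≤ Real.sqrt (∫ ω, (1 / pj (S ω) - 1) * vM (S ω) ∂(P[|ECE]))
          * Real.sqrt (∫ ω, (1 / pk (S ω) - 1) * vM' (S ω) ∂(P[|ECE])) := by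
      have hF : MemLp (fun ω => Real.sqrt ((1 / pj (S ω) - 1) * vM (S ω))) 2 (P[|ECE]) :=
        hMS fun s => Real.sqrt ((1 / pj s - 1) * vM s)
      have hG : MemLp (fun ω => Real.sqrt ((1 / pk (S ω) - 1) * vM' (S ω))) 2 (P[|ECE]) :=
        hMS fun s => Real.sqrt ((1 / pk s - 1) * vM' s)
      have h1 : |∫ ω, cM (S ω) ∂(P[|ECE])| ≤ ∫ ω, |cM (S ω)| ∂(P[|ECE]) := by
        simpa [Real.norm_eq_abs] using
          norm_integral_le_integral_norm (μ := P[|ECE]) (fun ω => cM (S ω))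
      have h2 : ∫ ω, |cM (S ω)| ∂(P[|ECE])
          ≤ ∫ ω, Real.sqrt ((1 / pj (S ω) - 1) * vM (S ω))
              * Real.sqrt ((1 / pk (S ω) - 1) * vM' (S ω)) ∂(P[|ECE]) := by
        refine integral_mono_ae (hIS fun s => |cM s|)
          (Stmt15Aux.integrable_mul₂ hF hG) ?_
        filter_upwards [hwae] with ω hw
        obtain ⟨hw1, hw2, hw3⟩ := hw
        calc |cM (S ω)| ≤ Real.sqrt (vM (S ω)) * Real.sqrt (vM' (S ω)) := hCSpt ω
          _ = Real.sqrt (vM (S ω) * vM' (S ω)) := (Real.sqrt_mul (hvMnn ω) _).symm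
          _ ≤ Real.sqrt ((1 / pj (S ω) - 1) * vM (S ω)
                * ((1 / pk (S ω) - 1) * vM' (S ω))) := by
              apply Real.sqrt_le_sqrt
              nlinarith [mul_le_mul_of_nonneg_right hw3 (mul_nonneg (hvMnn ω) (hvM'nn ω))]
          _ = _ := Real.sqrt_mul (mul_nonneg hw1 (hvMnn ω)) _
      have h3 : ∫ ω, Real.sqrt ((1 / pj (S ω) - 1) * vM (S ω))
            * Real.sqrt ((1 / pk (S ω) - 1) * vM' (S ω)) ∂(P[|ECE])
          ≤ Real.sqrt (∫ ω, (1 / pj (S ω) - 1) * vM (S ω) ∂(P[|ECE]))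
            * Real.sqrt (∫ ω, (1 / pk (S ω) - 1) * vM' (S ω) ∂(P[|ECE])) := by
        have h4 := Stmt15Aux.abs_integral_mul_le hF hG
        have hFa : ∫ ω, Real.sqrt ((1 / pj (S ω) - 1) * vM (S ω)) ^ 2 ∂(P[|ECE])
            = ∫ ω, (1 / pj (S ω) - 1) * vM (S ω) ∂(P[|ECE]) := by
          refine integral_congr_ae ?_
          filter_upwards [hwae] with ω hw
          exact Real.sq_sqrt (mul_nonneg hw.1 (hvMnn ω))
        have hGb : ∫ ω, Real.sqrt ((1 / pk (S ω) - 1) * vM' (S ω)) ^ 2 ∂(P[|ECE])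
            = ∫ ω, (1 / pk (S ω) - 1) * vM' (S ω) ∂(P[|ECE]) := by
          refine integral_congr_ae ?_
          filter_upwards [hwae] with ω hw
          exact Real.sq_sqrt (mul_nonneg hw.2.1 (hvM'nn ω))
        rw [hFa, hGb] at h4
        exact (le_abs_self _).trans h4
      calc |∫ ω, cM (S ω) ∂(P[|ECE])| ≤ _ := h1
        _ ≤ _ := h2
        _ ≤ _ := h3
    exact main _ _ _ ha hb habs
end
end
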